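/- arXiv:1803.09573 — 6 statements merged into one kernel-verified Lean document; each statement's English description precedes it below -/
import Mathlib

section
/- For all integers k ≥ 2 and r ≥ 3 such that r(k-1) is divisible by 3, and every real ε > 0, there exists n₀ ∈ ℕ such that for all n ≥ n₀ one has f(r,k;n) ≥ 3^((1/3)·r·(k-1-ε)·C(n,⌊n/2⌋)). -/
/-- An `(r,k)`-colouring of a family `F` of subsets of `[n]`: an assignment of one of `r`
colours to each member of `F` such that no `k`-chain in `F` is monochromatic. -/
def IsRKColouring {n r : ℕ} (k : ℕ) (F : Finset (Finset (Fin n)))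
    (c : {A // A ∈ F} → Fin r) : Prop :=
  ∀ ch : Fin k → {A // A ∈ F},
    (∀ i j : Fin k, i < j → (ch i : Finset (Fin n)) ⊂ (ch j : Finset (Fin n))) →
    ∃ i j : Fin k, c (ch i) ≠ c (ch j)

/-- The number of `(r,k)`-colourings of the family `F ⊆ 2^[n]`. -/
noncomputable def numColourings (r k n : ℕ) (F : Finset (Finset (Fin n))) : ℕ :=
  Nat.card {c : {A // A ∈ F} → Fin r // IsRKColouring k F c}

/-- `F` contains no `k`-chain. -/
def kChainFree (k : ℕ) {n : ℕ} (F : Finset (Finset (Fin n))) : Prop :=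
  ¬ ∃ ch : Fin k → Finset (Fin n), (∀ i, ch i ∈ F) ∧
      ∀ i j : Fin k, i < j → ch i ⊂ ch j

/-- `m_{k-1}`, the size of the family of all subsets of `[n]` of size between
`⌊(n-k+2)/2⌋` and `⌊(n+k-2)/2⌋`. -/
def mSize (n k : ℕ) : ℕ := ∑ i ∈ Finset.Icc ((n - k + 2) / 2) ((n + k - 2) / 2), n.choose i

/-- `f(r,k;n)`: the maximum number of `(r,k)`-colourings over all families in `2^[n]`. -/
noncomputable def fMax (r k n : ℕ) : ℕ :=
  Finset.sup Finset.univ (fun F : Finset (Finset (Fin n)) => numColourings r k n F)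

/-- The number of comparable pairs in a family. -/
def cpairs {n : ℕ} (F : Finset (Finset (Fin n))) : ℕ :=
  ((F ×ˢ F).filter fun p => p.1 ⊂ p.2).card

/-- The weight `w_k(F)` of a set `F ⊆ [n]`. -/
noncomputable def wk (n k : ℕ) (F : Finset (Fin n)) : ℝ :=
  min ((n.choose F.card : ℝ))⁻¹ ((n.choose ((n - k) / 2) : ℝ))⁻¹

/-- The weight `w_k(𝓕)` of a family `𝓕 ⊆ 2^[n]`. -/
noncomputable def wkFam (n k : ℕ) (F : Finset (Finset (Fin n))) : ℝ :=
  ∑ A ∈ F, wk n k A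

open scoped Classical in
lemma layers_card_le (r k ℓ : ℕ) (hr : 3 ≤ r) (h3 : 3 * ℓ = r * k) (c : ℕ) (hc : c < r) :
    ((Finset.range ℓ).filter (fun j => ∃ t, t < 3 ∧ (3*j + t) % r = c)).card ≤ k := by
  have hr0 : 0 < r := by omega
  have key : ∀ j ∈ (Finset.range ℓ).filter (fun j => ∃ t, t < 3 ∧ (3*j + t) % r = c),
      (c + 3*ℓ*r - 3*j) % r < 3 ∧ (3*j + (c + 3*ℓ*r - 3*j) % r) % r = c := by
    intro j hj
    simp only [Finset.mem_filter, Finset.mem_range] at hj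
    obtain ⟨hjℓ, t, ht3, htc⟩ := hj
    have hle : 3*j ≤ 3*ℓ*r := by
      have := Nat.mul_le_mul_left (3*ℓ) (show 1 ≤ r by omega)
      omega
    set d := (c + 3*ℓ*r - 3*j) % r with hd
    have hdr : d < r := Nat.mod_lt _ hr0
    have hmod : (3*j + d) % r = c := by
      rw [hd, Nat.add_mod_mod]
      have : 3*j + (c + 3*ℓ*r - 3*j) = c + (3*ℓ)*r := by omega
      rw [this, Nat.add_mul_mod_self_right, Nat.mod_eq_of_lt hc]
    have htd : t = d := by
      have h1 : (3*j + t) % r = (3*j + d) % r := by rw [htc, hmod]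
      have h2 : Nat.ModEq r t d := Nat.ModEq.add_left_cancel' (3*j) h1
      exact h2.eq_of_lt_of_lt (by omega) hdr
    exact ⟨by omega, hmod⟩
  have := Finset.card_le_card_of_injOn
    (f := fun j => (3*j + (c + 3*ℓ*r - 3*j) % r) / r)
    (s := (Finset.range ℓ).filter (fun j => ∃ t, t < 3 ∧ (3*j + t) % r = c))
    (t := Finset.range k) ?_ ?_
  · simpa using this
  · intro j hj
    obtain ⟨hd3, hmod⟩ := key j hj
    simp only [Finset.mem_filter, Finset.mem_range] at hj ⊢
    have hjℓ : j < ℓ := by simp at hj; exact hj.1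
    exact Finset.mem_coe.mpr (Finset.mem_range.mpr (Nat.div_lt_of_lt_mul (by omega)))
  · intro j1 h1 j2 h2 heq
    obtain ⟨hd1, hm1⟩ := key j1 h1
    obtain ⟨hd2, hm2⟩ := key j2 h2
    set p1 := 3*j1 + (c + 3*ℓ*r - 3*j1) % r with hp1
    set p2 := 3*j2 + (c + 3*ℓ*r - 3*j2) % r with hp2
    have e1 : p1 = r * (p1 / r) + c := by conv_lhs => rw [← Nat.div_add_mod p1 r, hm1]
    have e2 : p2 = r * (p2 / r) + c := by conv_lhs => rw [← Nat.div_add_mod p2 r, hm2]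
    have heq' : p1 / r = p2 / r := heq
    have hpp : p1 = p2 := by rw [e1, e2, heq']
    omega

lemma choose_ratio_pow (n ℓ : ℕ) (hℓ1 : 1 ≤ ℓ) (hℓ : 2*ℓ ≤ n/2) :
    ∀ i ≤ ℓ, ((((n/2 : ℕ) : ℝ) - ℓ)/(((n/2 : ℕ) : ℝ) + ℓ)) ^ i * (n.choose (n/2) : ℝ)
      ≤ (n.choose (n/2 + i) : ℝ) := by
  set x := n/2 with hx
  have hxn : x + x ≤ n := by omega
  have hℓx : 2*ℓ ≤ x := hℓ
  have hxR : (2:ℝ)*ℓ ≤ (x:ℝ) := by exact_mod_cast hℓx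
  have hℓR : (1:ℝ) ≤ (ℓ:ℝ) := by exact_mod_cast hℓ1
  have hnR : (x:ℝ) + (x:ℝ) ≤ (n:ℝ) := by exact_mod_cast hxn
  have hxpos : (0:ℝ) < (x:ℝ) + ℓ := by nlinarith
  have hnum : (0:ℝ) ≤ (x:ℝ) - ℓ := by nlinarith
  intro i
  induction i with
  | zero => intro _; simp
  | succ i ih =>
    intro hi1
    have hi : i ≤ ℓ := by omega
    have IH := ih hi
    have hxin : x + i < n := by omega
    -- choose identity
    have hkey : (n.choose (x + i + 1) : ℝ) * ((x:ℝ) + i + 1)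
        = (n.choose (x + i) : ℝ) * ((n:ℝ) - ((x:ℝ) + i)) := by
      have := Nat.choose_succ_right_eq n (x + i)
      have hcast : ((n - (x+i) : ℕ) : ℝ) = (n:ℝ) - ((x:ℝ) + i) := by
        push_cast [Nat.cast_sub (le_of_lt hxin)]; ring
      calc (n.choose (x + i + 1) : ℝ) * ((x:ℝ) + i + 1)
          = ((n.choose (x+i+1) * (x+i+1) : ℕ) : ℝ) := by push_cast; ring
        _ = ((n.choose (x+i) * (n - (x+i)) : ℕ) : ℝ) := by rw [this]
        _ = (n.choose (x + i) : ℝ) * ((n:ℝ) - ((x:ℝ) + i)) := by push_cast [Nat.cast_sub (le_of_lt hxin)]; ring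
    have hdpos : (0:ℝ) < (x:ℝ) + i + 1 := by positivity
    have hchoose_eq : (n.choose (x + i + 1) : ℝ)
        = (n.choose (x + i) : ℝ) * (((n:ℝ) - ((x:ℝ) + i)) / ((x:ℝ) + i + 1)) := by
      field_simp
      linarith [hkey]
    have hiR : (i:ℝ) ≤ (ℓ:ℝ) := by exact_mod_cast hi
    have hi1R : (i:ℝ) + 1 ≤ (ℓ:ℝ) := by exact_mod_cast hi1
    have hratio : ((x:ℝ) - ℓ)/((x:ℝ) + ℓ) ≤ ((n:ℝ) - ((x:ℝ) + i)) / ((x:ℝ) + i + 1) := by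
      apply div_le_div₀ (by nlinarith) (by nlinarith) hdpos (by nlinarith)
    have hρ0 : (0:ℝ) ≤ ((x:ℝ) - ℓ)/((x:ℝ) + ℓ) := div_nonneg hnum (le_of_lt hxpos)
    calc (((x:ℝ) - ℓ)/((x:ℝ) + ℓ)) ^ (i+1) * (n.choose x : ℝ)
        = (((x:ℝ) - ℓ)/((x:ℝ) + ℓ)) * ((((x:ℝ) - ℓ)/((x:ℝ) + ℓ)) ^ i * (n.choose x : ℝ)) := by ring
      _ ≤ (((x:ℝ) - ℓ)/((x:ℝ) + ℓ)) * (n.choose (x + i) : ℝ) := by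
          exact mul_le_mul_of_nonneg_left IH hρ0
      _ ≤ (((n:ℝ) - ((x:ℝ) + i)) / ((x:ℝ) + i + 1)) * (n.choose (x + i) : ℝ) := by
          exact mul_le_mul_of_nonneg_right hratio (by positivity)
      _ = (n.choose (x + i + 1) : ℝ) := by rw [hchoose_eq]; ring

open scoped Classical in
lemma card_filter_layers (n ℓ : ℕ) :
    (Finset.univ.filter (fun A : Finset (Fin n) => n/2 ≤ A.card ∧ A.card < n/2 + ℓ)).card
      = ∑ i ∈ Finset.Ico (n/2) (n/2 + ℓ), n.choose i := by
  have hset : Finset.univ.filter (fun A : Finset (Fin n) => n/2 ≤ A.card ∧ A.card < n/2 + ℓ)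
      = (Finset.Ico (n/2) (n/2+ℓ)).biUnion
        (fun i => Finset.powersetCard i (Finset.univ : Finset (Fin n))) := by
    ext A
    simp only [Finset.mem_filter, Finset.mem_univ, true_and, Finset.mem_biUnion,
      Finset.mem_Ico, Finset.mem_powersetCard_univ]
    constructor
    · rintro ⟨h1, h2⟩; exact ⟨A.card, ⟨h1, h2⟩, rfl⟩
    · rintro ⟨i, ⟨h1, h2⟩, rfl⟩; exact ⟨h1, h2⟩
  rw [hset, Finset.card_biUnion]
  · apply Finset.sum_congr rfl
    intro i _
    simp [Finset.card_powersetCard]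
  · intro i _ j _ hij
    simp only [Finset.disjoint_left]
    intro A hA hA'
    rw [Finset.mem_powersetCard_univ] at hA hA'
    exact hij (hA ▸ hA')

open scoped Classical in
lemma numColourings_ge (r k n ℓ : ℕ) (hr : 3 ≤ r) (hk : 2 ≤ k) (h3 : 3*ℓ = r*(k-1)) :
    3 ^ (Finset.univ.filter
        (fun A : Finset (Fin n) => n/2 ≤ A.card ∧ A.card < n/2 + ℓ)).card
      ≤ numColourings r k n (Finset.univ.filter
        (fun A : Finset (Fin n) => n/2 ≤ A.card ∧ A.card < n/2 + ℓ)) := by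
  have hr0 : 0 < r := by omega
  set F := Finset.univ.filter
      (fun A : Finset (Fin n) => n/2 ≤ A.card ∧ A.card < n/2 + ℓ) with hF
  -- the colouring associated to a choice function g
  set Φ : ({A // A ∈ F} → Fin 3) → ({A // A ∈ F} → Fin r) :=
    fun g A => ⟨(3*((A : Finset (Fin n)).card - n/2) + (g A : ℕ)) % r,
      Nat.mod_lt _ hr0⟩ with hΦ
  have hvalid : ∀ g, IsRKColouring k F (Φ g) := by
    intro g ch hch
    by_contra hcon
    push_neg at hcon
    have hk0 : 0 < k := by omega
    set i0 : Fin k := ⟨0, hk0⟩ with hi0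
    set c0 : ℕ := (Φ g (ch i0) : ℕ) with hc0
    have hc0r : c0 < r := (Φ g (ch i0)).isLt
    set jf : Fin k → ℕ := fun i => ((ch i : Finset (Fin n)).card - n/2) with hjf
    have hmem : ∀ i : Fin k, n/2 ≤ (ch i : Finset (Fin n)).card ∧
        (ch i : Finset (Fin n)).card < n/2 + ℓ := by
      intro i
      exact (Finset.mem_filter.mp (ch i).2).2
    have hjS : ∀ i : Fin k, jf i ∈ (Finset.range ℓ).filter
        (fun j => ∃ t, t < 3 ∧ (3*j + t) % r = c0) := by
      intro i
      simp only [Finset.mem_filter, Finset.mem_range]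
      refine ⟨by have := hmem i; simp only [hjf]; omega, (g (ch i) : ℕ), (g (ch i)).isLt, ?_⟩
      have hcc : Φ g (ch i) = Φ g (ch i0) := hcon i i0
      have : (Φ g (ch i) : ℕ) = c0 := by rw [hcc]
      simpa [hΦ, hjf] using this
    have hinj : Set.InjOn jf (Finset.univ : Finset (Fin k)) := by
      intro a _ b _ hab
      by_contra hne
      have hcard : ∀ {u v : Fin k}, u < v → jf u < jf v := by
        intro u v huv
        have hsub := hch u v huv
        have := Finset.card_lt_card hsub
        have h1 := (hmem u).1
        simp only [hjf]
        omega
      rcases lt_or_gt_of_ne hne with h | h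
      · exact absurd hab (by have := hcard h; omega)
      · exact absurd hab (by have := hcard h; omega)
    have hle := Finset.card_le_card_of_injOn jf
      (fun i _ => hjS i) hinj
    have hS := layers_card_le r (k-1) ℓ hr h3 c0 hc0r
    simp only [Finset.card_univ, Fintype.card_fin] at hle
    omega
  have hinjΦ : Function.Injective
      (fun g : ({A // A ∈ F} → Fin 3) =>
        (⟨Φ g, hvalid g⟩ : {c // IsRKColouring k F c})) := by
    intro g g' hgg
    have h1 : Φ g = Φ g' := congrArg Subtype.val hgg
    funext A
    have h2 : (Φ g A : ℕ) = (Φ g' A : ℕ) := by rw [h1]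
    simp only [hΦ] at h2
    have h3' : Nat.ModEq r ((g A : ℕ)) ((g' A : ℕ)) :=
      Nat.ModEq.add_left_cancel' _ h2
    have := h3'.eq_of_lt_of_lt (lt_of_lt_of_le (g A).isLt hr) (lt_of_lt_of_le (g' A).isLt hr)
    exact Fin.ext this
  have hcard1 : Nat.card ({A // A ∈ F} → Fin 3) = 3 ^ F.card := by
    simp [Nat.card_eq_fintype_card, Fintype.card_fun, Fintype.card_coe]
  calc 3 ^ F.card = Nat.card ({A // A ∈ F} → Fin 3) := hcard1.symm
    _ ≤ Nat.card {c // IsRKColouring k F c} := Nat.card_le_card_of_injective _ hinjΦ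
    _ = numColourings r k n F := rfl


/-- For integers `k ≥ 2`, `r ≥ 3` with `3 ∣ r(k-1)` and real `ε > 0`, for all
sufficiently large `n` one has `f(r,k;n) ≥ 3^((1/3)·r·(k-1-ε)·C(n,⌊n/2⌋))`. -/
theorem fMax_lower_bound (k r : ℕ) (hk : 2 ≤ k) (hr : 3 ≤ r) (hdvd : 3 ∣ r * (k - 1))
    (ε : ℝ) (hε : 0 < ε) :
    ∃ n₀ : ℕ, ∀ n : ℕ, n₀ ≤ n →
      (3 : ℝ) ^ ((1 / 3 : ℝ) * r * ((k : ℝ) - 1 - ε) * (n.choose (n / 2) : ℝ)) ≤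
        (fMax r k n : ℝ) := by
  have hk1 : 1 ≤ k - 1 := by omega
  set ℓ := r * (k-1) / 3 with hℓdef
  have h3ℓ : 3 * ℓ = r * (k-1) := Nat.mul_div_cancel' hdvd
  have hℓ1 : 1 ≤ ℓ := by
    have h1 : 3 * 1 ≤ r * (k-1) := Nat.mul_le_mul hr hk1
    omega
  have hkR : (1:ℝ) ≤ (k:ℝ) - 1 := by
    have : (2:ℝ) ≤ (k:ℝ) := by exact_mod_cast hk
    linarith
  have hk1ne : (k:ℝ) - 1 ≠ 0 := by linarith
  set δ : ℝ := ε / ((k:ℝ) - 1) with hδ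
  have hδpos : 0 < δ := div_pos hε (by linarith)
  set M := Nat.ceil ((2*(ℓ:ℝ)^2)/δ) with hM
  refine ⟨max (4*ℓ+2) (2*M+2), fun n hn => ?_⟩
  have hn1 : 4*ℓ+2 ≤ n := le_trans (le_max_left _ _) hn
  have hn2 : 2*M+2 ≤ n := le_trans (le_max_right _ _) hn
  have hx2ℓ : 2*ℓ ≤ n/2 := by omega
  have hxM : M + 1 ≤ n/2 := by omega
  set ρ : ℝ := (((n/2 : ℕ):ℝ) - ℓ)/(((n/2 : ℕ):ℝ) + ℓ) with hρ
  have hxR : (2:ℝ)*(ℓ:ℝ) ≤ ((n/2 : ℕ):ℝ) := by exact_mod_cast hx2ℓ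
  have hℓR : (1:ℝ) ≤ (ℓ:ℝ) := by exact_mod_cast hℓ1
  have hxℓpos : (0:ℝ) < ((n/2 : ℕ):ℝ) + ℓ := by linarith
  have hρ0 : 0 ≤ ρ := div_nonneg (by linarith) (le_of_lt hxℓpos)
  have hρ1 : ρ ≤ 1 := by rw [hρ, div_le_one hxℓpos]; linarith
  have hber : 1 - 2*(ℓ:ℝ)^2/(((n/2 : ℕ):ℝ)+ℓ) ≤ ρ^ℓ := by
    have h2 : 2*(ℓ:ℝ)/(((n/2 : ℕ):ℝ)+ℓ) ≤ 2 := by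
      rw [div_le_iff₀ hxℓpos]; linarith
    have ha : (-2:ℝ) ≤ -(2*(ℓ:ℝ)/(((n/2 : ℕ):ℝ)+ℓ)) := by linarith
    have hb := one_add_mul_le_pow ha ℓ
    have heq1 : (1:ℝ) + (-(2*(ℓ:ℝ)/(((n/2 : ℕ):ℝ)+ℓ))) = ρ := by
      rw [hρ]; field_simp; ring
    calc 1 - 2*(ℓ:ℝ)^2/(((n/2 : ℕ):ℝ)+ℓ)
        = 1 + (ℓ:ℕ)*(-(2*(ℓ:ℝ)/(((n/2 : ℕ):ℝ)+ℓ))) := by field_simp; ring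
      _ ≤ (1 + (-(2*(ℓ:ℝ)/(((n/2 : ℕ):ℝ)+ℓ))))^ℓ := hb
      _ = ρ^ℓ := by rw [heq1]
  have hδbound : 2*(ℓ:ℝ)^2/(((n/2 : ℕ):ℝ)+ℓ) ≤ δ := by
    rw [div_le_iff₀ hxℓpos]
    have hMx : (M:ℝ) ≤ ((n/2 : ℕ):ℝ) := by exact_mod_cast (by omega : M ≤ n/2)
    have hceil : (2*(ℓ:ℝ)^2)/δ ≤ (M:ℝ) := Nat.le_ceil _
    have h1 : 2*(ℓ:ℝ)^2 ≤ δ * ((n/2:ℕ):ℝ) := by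
      rw [div_le_iff₀ hδpos] at hceil
      nlinarith
    nlinarith [hδpos.le, hℓR]
  have hρℓ : 1 - δ ≤ ρ^ℓ := by linarith
  have hm0 : (0:ℝ) ≤ (n.choose (n/2) : ℝ) := Nat.cast_nonneg _
  set F := Finset.univ.filter
      (fun A : Finset (Fin n) => n/2 ≤ A.card ∧ A.card < n/2 + ℓ) with hF
  have hterm : ∀ i ∈ Finset.Ico (n/2) (n/2+ℓ),
      (1-δ)*(n.choose (n/2) : ℝ) ≤ (n.choose i : ℝ) := by
    intro i hi
    rw [Finset.mem_Ico] at hi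
    obtain ⟨h1, h2⟩ := hi
    have h3 : i - n/2 ≤ ℓ := by omega
    have hcr := choose_ratio_pow n ℓ hℓ1 hx2ℓ (i - n/2) h3
    have hρi : ρ^ℓ ≤ ρ^(i-n/2) := pow_le_pow_of_le_one hρ0 hρ1 h3
    have hix : n/2 + (i - n/2) = i := by omega
    rw [hix] at hcr
    calc (1-δ)*(n.choose (n/2) : ℝ)
        ≤ ρ^ℓ * (n.choose (n/2) : ℝ) := mul_le_mul_of_nonneg_right hρℓ hm0
      _ ≤ ρ^(i-n/2) * (n.choose (n/2) : ℝ) := mul_le_mul_of_nonneg_right hρi hm0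
      _ ≤ _ := hcr
  have hFcard : (F.card : ℝ) = ∑ i ∈ Finset.Ico (n/2) (n/2+ℓ), (n.choose i : ℝ) := by
    rw [hF, card_filter_layers]
    push_cast
    rfl
  have hsum : (ℓ:ℝ) * ((1-δ)*(n.choose (n/2) : ℝ)) ≤ (F.card : ℝ) := by
    rw [hFcard]
    have hs := Finset.card_nsmul_le_sum (Finset.Ico (n/2) (n/2+ℓ))
      (fun i => (n.choose i:ℝ)) ((1-δ)*(n.choose (n/2) : ℝ)) hterm
    simpa [Nat.card_Ico, nsmul_eq_mul] using hs
  have h3ℓR : (3:ℝ) * (ℓ:ℝ) = (r:ℝ) * ((k:ℝ) - 1) := by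
    have hc := congrArg (Nat.cast : ℕ → ℝ) h3ℓ
    push_cast [Nat.cast_sub (show 1 ≤ k by omega)] at hc
    linarith
  have hexp : (1/3 : ℝ) * r * ((k:ℝ) - 1 - ε) * (n.choose (n/2) : ℝ) ≤ (F.card : ℝ) := by
    have hEq : (1/3 : ℝ) * r * ((k:ℝ) - 1 - ε) = (ℓ:ℝ) * (1 - δ) := by
      rw [hδ, show (ℓ:ℝ) = (r:ℝ)*((k:ℝ)-1)/3 by linarith]
      field_simp
    calc (1/3 : ℝ) * r * ((k:ℝ) - 1 - ε) * (n.choose (n/2) : ℝ)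
        = (ℓ:ℝ) * ((1-δ)*(n.choose (n/2) : ℝ)) := by rw [hEq]; ring
      _ ≤ _ := hsum
  have hnum := numColourings_ge r k n ℓ hr hk h3ℓ
  have hfmax : numColourings r k n F ≤ fMax r k n := Finset.le_sup (Finset.mem_univ F)
  calc (3:ℝ) ^ ((1/3 : ℝ) * r * ((k:ℝ) - 1 - ε) * (n.choose (n/2) : ℝ))
      ≤ (3:ℝ) ^ ((F.card : ℕ) : ℝ) := Real.rpow_le_rpow_of_exponent_le (by norm_num) hexp
    _ = ((3 ^ F.card : ℕ) : ℝ) := by rw [Real.rpow_natCast]; push_cast; ring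
    _ ≤ (numColourings r k n F : ℝ) := by exact_mod_cast hnum
    _ ≤ (fMax r k n : ℝ) := by exact_mod_cast hfmax
end

section
/- Let n and k be integers with k ≥ 2 and n ≥ 4k². Suppose 𝓕₀, 𝓕₁, …, 𝓕_s are subfamilies of 2^[n] such that |𝓕₀| + Σ_{i=1}^{s} αᵢ|𝓕ᵢ| ≥ m_{k-1} + t for some positive reals α₁,…,α_s and some non-negative integer t. Then w_k(𝓕₀) + (1 + 2k²/n)·Σ_{i=1}^{s} αᵢ·w_k(𝓕ᵢ) ≥ k - 1 + t·C(n,⌊n/2⌋)⁻¹. -/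
set_option maxHeartbeats 1000000



section WeightTransferenceAux

open Finset

lemma powAux : ∀ (j : ℕ) (u : ℝ), 0 ≤ u → (1 - (j : ℝ) * u) * (1 + u) ^ j ≤ 1 := by
  intro j
  induction j with
  | zero => intro u _; norm_num
  | succ j ih =>
    intro u hu
    have h1 := ih u hu
    have h2 : (0:ℝ) ≤ ((j:ℝ) * u ^ 2 + u ^ 2) * (1 + u) ^ j := by positivity
    have hexp : (1 - ((j:ℕ)+1 : ℝ) * u) * (1 + u) ^ (j+1)
        = (1 - (j:ℝ) * u) * (1 + u) ^ j - ((j:ℝ) * u ^ 2 + u ^ 2) * (1 + u) ^ j := by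
      rw [pow_succ]; ring
    push_cast
    push_cast at hexp
    rw [hexp]
    linarith

lemma chooseStep (n k : ℕ) (hk : 2 ≤ k) (hn : 4 * k ^ 2 ≤ n) (i : ℕ)
    (hai : (n - k + 2) / 2 ≤ i) (hic : i < n / 2) :
    (n.choose (i+1) : ℝ) ≤ (1 + 2*(k:ℝ)/((n:ℝ)-(k:ℝ))) * n.choose i := by
  have hkn : k ≤ n := by nlinarith
  have hknR : (k:ℝ) ≤ (n:ℝ) := by exact_mod_cast hkn
  have hnk_pos : (0:ℝ) < (n:ℝ) - (k:ℝ) := by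
    have h : k < n := by nlinarith
    have h2 : (k:ℝ) < (n:ℝ) := by exact_mod_cast h
    linarith
  have hin : i ≤ n := by omega
  have hE := Nat.choose_succ_right_eq n i
  have hEr : (n.choose (i+1) : ℝ) * ((i:ℝ)+1) = (n.choose i : ℝ) * ((n:ℝ) - (i:ℝ)) := by
    have h1 := congrArg (Nat.cast (R := ℝ)) hE
    push_cast [Nat.cast_sub hin] at h1
    linarith
  have h2i : (n:ℝ) - (k:ℝ) + 1 ≤ 2 * (i:ℝ) := by
    have h : n - k + 1 ≤ 2 * i := by omega
    have h2 := (Nat.cast_le (α := ℝ)).mpr h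
    push_cast [Nat.cast_sub hkn] at h2
    linarith
  set u : ℝ := 2*(k:ℝ)/((n:ℝ)-(k:ℝ)) with hu
  have hu_nonneg : 0 ≤ u := by positivity
  have hu_mul : u * ((n:ℝ)-(k:ℝ)) = 2*(k:ℝ) := by rw [hu]; field_simp
  have hip : (0:ℝ) < (i:ℝ) + 1 := by positivity
  rw [← mul_le_mul_iff_of_pos_right hip, hEr]
  have hCpos : (0:ℝ) ≤ (n.choose i : ℝ) := by positivity
  have hkey : (n:ℝ) - (i:ℝ) ≤ (1+u) * ((i:ℝ)+1) := by
    have h3 : u * ((i:ℝ)+1) * ((n:ℝ)-(k:ℝ)) = 2*(k:ℝ)*((i:ℝ)+1) := by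
      rw [mul_right_comm, hu_mul]
    have h4 : (k:ℝ)*((n:ℝ)-(k:ℝ)+3) ≤ 2*(k:ℝ)*((i:ℝ)+1) := by nlinarith
    have h5 : (k:ℝ) ≤ u * ((i:ℝ)+1) := by
      rw [← sub_nonneg]
      have h5a : (u * ((i:ℝ)+1) - (k:ℝ)) * ((n:ℝ)-(k:ℝ))
          = 2*(k:ℝ)*((i:ℝ)+1) - (k:ℝ)*((n:ℝ)-(k:ℝ)) := by
        rw [sub_mul, h3]
      exact (mul_nonneg_iff_of_pos_right hnk_pos).mp (by nlinarith)
    nlinarith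
  calc (n.choose i : ℝ) * ((n:ℝ)-(i:ℝ))
      ≤ (n.choose i : ℝ) * ((1+u) * ((i:ℝ)+1)) := mul_le_mul_of_nonneg_left hkey hCpos
    _ = (1 + u) * (n.choose i : ℝ) * ((i:ℝ)+1) := by ring

lemma chooseRatio (n k : ℕ) (hk : 2 ≤ k) (hn : 4 * k ^ 2 ≤ n) :
    (n.choose (n/2) : ℝ) ≤ (1 + 2*(k:ℝ)^2/(n:ℝ)) * (n.choose ((n - k + 2)/2) : ℝ) := by
  have hkn : k ≤ n := by nlinarith
  have hn_pos : (0:ℝ) < (n:ℝ) := by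
    have : 0 < n := by nlinarith
    exact_mod_cast this
  set a := (n - k + 2) / 2 with ha
  set c := n / 2 with hc
  have hac : a ≤ c := by omega
  set j := c - a with hj
  have h2j : 2 * j + 1 ≤ k := by omega
  have h2jR : 2*(j:ℝ) ≤ (k:ℝ) - 1 := by
    have := (Nat.cast_le (α := ℝ)).mpr h2j
    push_cast at this; linarith
  set u : ℝ := 2*(k:ℝ)/((n:ℝ)-(k:ℝ)) with hu
  have hnk_pos : (0:ℝ) < (n:ℝ) - (k:ℝ) := by
    have h : k < n := by nlinarith
    have h2 : (k:ℝ) < (n:ℝ) := by exact_mod_cast h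
    linarith
  have hkR : (2:ℝ) ≤ (k:ℝ) := by exact_mod_cast hk
  have hu_nonneg : 0 ≤ u := by positivity
  have hu_mul : u * ((n:ℝ)-(k:ℝ)) = 2*(k:ℝ) := by rw [hu]; field_simp
  have chain : ∀ i : ℕ, i ≤ j → (n.choose (a+i) : ℝ) ≤ (1+u)^i * n.choose a := by
    intro i
    induction i with
    | zero => intro _; simp
    | succ i ih =>
      intro h
      have h1 := ih (by omega)
      have h2 := chooseStep n k hk hn (a+i) (by omega) (by omega)
      have h3 : (0:ℝ) ≤ 1 + u := by linarith
      calc (n.choose (a+(i+1)) : ℝ) = (n.choose ((a+i)+1) : ℝ) := by ring_nf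
        _ ≤ (1+u) * n.choose (a+i) := h2
        _ ≤ (1+u) * ((1+u)^i * n.choose a) := by
            exact mul_le_mul_of_nonneg_left h1 h3
        _ = (1+u)^(i+1) * n.choose a := by ring
  have hmain := chain j le_rfl
  rw [show a + j = c by omega] at hmain
  set P : ℝ := (1+u)^j with hP
  have hP_pos : (0:ℝ) < P := by positivity
  have hP1 : (1 - (j:ℝ)*u) * P ≤ 1 := powAux j u hu_nonneg
  have hju_mul : (j:ℝ)*u*((n:ℝ)-(k:ℝ)) = 2*(j:ℝ)*(k:ℝ) := by
    rw [hu]; field_simp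
  have hn2k : 2*(k:ℝ)^2 ≤ (n:ℝ)-(k:ℝ) := by
    have h : 2*k^2 + k ≤ n := by nlinarith
    have h2 := (Nat.cast_le (α := ℝ)).mpr h
    push_cast at h2; linarith
  have hju_nonneg : 0 ≤ (j:ℝ)*u := by positivity
  have h6 : 2*(j:ℝ)*(k:ℝ) ≤ ((k:ℝ)-1)*(k:ℝ) := by nlinarith
  have hju_half : (j:ℝ)*u ≤ 1/2 := by
    rw [← sub_nonneg]
    have h7 : (1/2 - (j:ℝ)*u) * ((n:ℝ)-(k:ℝ))
        = ((n:ℝ)-(k:ℝ))/2 - 2*(j:ℝ)*(k:ℝ) := by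
      rw [sub_mul, hju_mul]; ring
    refine (mul_nonneg_iff_of_pos_right hnk_pos).mp ?_
    rw [h7]
    nlinarith
  have hP2 : P ≤ 2 := by
    nlinarith [mul_le_mul_of_nonneg_right hju_half hP_pos.le]
  have hP3 : P ≤ 1 + 2*((j:ℝ)*u) := by
    nlinarith [mul_le_mul_of_nonneg_left hP2 hju_nonneg]
  have hk2n : (k:ℝ)^2 ≤ (n:ℝ) := by
    have h : k^2 ≤ n := by nlinarith
    exact_mod_cast h
  have hfinal : 2*((j:ℝ)*u) ≤ 2*(k:ℝ)^2/(n:ℝ) := by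
    rw [div_eq_mul_inv, ← sub_nonneg]
    have key : (2*(k:ℝ)^2/(n:ℝ) - 2*((j:ℝ)*u)) * ((n:ℝ)*((n:ℝ)-(k:ℝ))) ≥ 0 := by
      have expand : (2*(k:ℝ)^2/(n:ℝ)) * ((n:ℝ)*((n:ℝ)-(k:ℝ))) = 2*(k:ℝ)^2*((n:ℝ)-(k:ℝ)) := by
        field_simp
      have expand2 : (2*((j:ℝ)*u)) * ((n:ℝ)*((n:ℝ)-(k:ℝ))) = 2*(2*(j:ℝ)*(k:ℝ))*(n:ℝ) := by
        rw [show (2*((j:ℝ)*u)) * ((n:ℝ)*((n:ℝ)-(k:ℝ))) = 2*((j:ℝ)*u*((n:ℝ)-(k:ℝ)))*(n:ℝ) by ring,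
          hju_mul]
      nlinarith [mul_le_mul_of_nonneg_right h6 hn_pos.le]
    have hprod : (0:ℝ) < (n:ℝ)*((n:ℝ)-(k:ℝ)) := by positivity
    have := (mul_nonneg_iff_of_pos_right hprod).mp key.le
    rw [div_eq_mul_inv] at this
    linarith
  have hCa : (0:ℝ) ≤ (n.choose a : ℝ) := by positivity
  calc (n.choose c : ℝ) ≤ P * n.choose a := hmain
    _ ≤ (1 + 2*(k:ℝ)^2/(n:ℝ)) * n.choose a := by
        apply mul_le_mul_of_nonneg_right _ hCa
        linarith

lemma chooseMonoLeft (n : ℕ) : ∀ (j i : ℕ), i ≤ j → j ≤ n / 2 → n.choose i ≤ n.choose j := by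
  intro j
  induction j with
  | zero => intro i h1 _; interval_cases i; rfl
  | succ j ih =>
    intro i h1 h2
    rcases Nat.eq_or_lt_of_le h1 with h | h
    · subst h; rfl
    · exact (ih i (by omega) (by omega)).trans
        (Nat.choose_le_succ_of_lt_half_left (by omega))

lemma chooseLower (n a i : ℕ) (h1 : a ≤ i) (h2 : i ≤ n - a) :
    n.choose a ≤ n.choose i := by
  rcases le_or_gt i (n / 2) with h | h
  · exact chooseMonoLeft n i a h1 h
  · have hin : i ≤ n := le_trans h2 (Nat.sub_le n a)
    rw [← Nat.choose_symm hin]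
    exact chooseMonoLeft n (n - i) a (by omega) (by omega)

-- Lemma B : every set has weight at least 1/C(n, n/2)
lemma wk_ge (n k : ℕ) (F : Finset (Fin n)) :
    ((n.choose (n/2) : ℝ))⁻¹ ≤ wk n k F := by
  have hc : 0 < n.choose (n/2) := Nat.choose_pos (Nat.div_le_self n 2)
  apply le_min
  · rcases le_or_gt F.card n with h | h
    · apply inv_anti₀
      · exact_mod_cast Nat.choose_pos h
      · exact_mod_cast Nat.choose_le_middle F.card n
    · exfalso
      have := F.card_le_univ
      simp [Fintype.card_fin] at this
      omega
  · apply inv_anti₀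
    · exact_mod_cast Nat.choose_pos (by omega : (n-k)/2 ≤ n)
    · exact_mod_cast Nat.choose_le_middle ((n-k)/2) n

lemma wk_nonneg (n k : ℕ) (F : Finset (Fin n)) : 0 ≤ wk n k F := by
  apply le_min <;> positivity

lemma wkFam_ge_card (n k : ℕ) (G : Finset (Finset (Fin n))) :
    ((n.choose (n/2) : ℝ))⁻¹ * G.card ≤ wkFam n k G := by
  rw [wkFam, mul_comm]
  calc (G.card : ℝ) * ((n.choose (n/2) : ℝ))⁻¹ = ∑ _A ∈ G, ((n.choose (n/2) : ℝ))⁻¹ := by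
        rw [Finset.sum_const, nsmul_eq_mul]
    _ ≤ ∑ A ∈ G, wk n k A := Finset.sum_le_sum fun A _ => wk_ge n k A

lemma lemA (n k : ℕ) (hk : 2 ≤ k) (hn : 4 * k ^ 2 ≤ n) (G : Finset (Finset (Fin n))) :
    ((k:ℝ) - 1) + (n.choose ((n - k + 2)/2) : ℝ)⁻¹ * (G.card : ℝ)
      - (n.choose ((n - k + 2)/2) : ℝ)⁻¹ * (mSize n k : ℝ) ≤ wkFam n k G := by
  have hkn : k ≤ n := by nlinarith
  have h16 : 16 ≤ n := by nlinarith
  have hk14 : k + 14 ≤ n := by nlinarith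
  set a := (n - k + 2) / 2 with ha
  set b := (n + k - 2) / 2 with hb
  set d := (n - k) / 2 with hd
  have hda : d + 1 = a := by omega
  have han : a ≤ n / 2 := by omega
  have hdn : d ≤ n / 2 := by omega
  have hab : a ≤ b := by omega
  have hbn : b ≤ n := by omega
  have h8a : 8 ≤ a := by omega
  have hCa_pos : (0:ℝ) < (n.choose a : ℝ) := by
    exact_mod_cast Nat.choose_pos (by omega : a ≤ n)
  set μ' : ℝ := (n.choose a : ℝ)⁻¹ with hμ'
  have hμ'_pos : 0 < μ' := by positivity
  have hμCa : μ' * (n.choose a : ℝ) = 1 := inv_mul_cancel₀ (ne_of_gt hCa_pos)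
  set g : ℕ → ℝ := fun i => min 0 (min ((n.choose i : ℝ))⁻¹ ((n.choose d : ℝ))⁻¹ - μ') with hg
  have hg_nonpos : ∀ i, g i ≤ 0 := fun i => min_le_left _ _
  -- step 1&2
  have step2 : μ' * (G.card : ℝ) + ∑ F ∈ G, g F.card ≤ wkFam n k G := by
    have step1 : ∀ F ∈ G, μ' + g F.card ≤ wk n k F := by
      intro F _
      have h1 : g F.card ≤ min ((n.choose F.card : ℝ))⁻¹ ((n.choose d : ℝ))⁻¹ - μ' :=
        min_le_right _ _
      rw [wk]
      rw [show (n - k)/2 = d from rfl]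
      linarith
    calc μ' * (G.card : ℝ) + ∑ F ∈ G, g F.card = ∑ F ∈ G, (μ' + g F.card) := by
          rw [Finset.sum_add_distrib, Finset.sum_const, nsmul_eq_mul]; ring
      _ ≤ ∑ F ∈ G, wk n k F := Finset.sum_le_sum step1
      _ = wkFam n k G := rfl
  -- step 3 : fiberwise
  have step3 : ∑ F ∈ G, g F.card
      = ∑ i ∈ Finset.range (n+1), ((G.filter (fun F => F.card = i)).card : ℝ) * g i := by
    have hmaps : ∀ F ∈ G, F.card ∈ Finset.range (n+1) := by
      intro F _
      rw [Finset.mem_range]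
      have := F.card_le_univ
      simp only [Finset.card_univ, Fintype.card_fin] at this
      omega
    rw [← Finset.sum_fiberwise_of_maps_to' hmaps g]
    apply Finset.sum_congr rfl
    intro i _
    rw [Finset.sum_const, nsmul_eq_mul]
  -- step 4 : replace counts by binomials
  have step4 : ∑ i ∈ Finset.range (n+1), (n.choose i : ℝ) * g i
      ≤ ∑ i ∈ Finset.range (n+1), ((G.filter (fun F => F.card = i)).card : ℝ) * g i := by
    apply Finset.sum_le_sum
    intro i _
    apply mul_le_mul_of_nonpos_right _ (hg_nonpos i)
    have hsub : G.filter (fun F => F.card = i) ⊆ Finset.powersetCard i Finset.univ := by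
      intro F hF
      rw [Finset.mem_powersetCard_univ]
      exact (Finset.mem_filter.mp hF).2
    have hcard := Finset.card_le_card hsub
    rw [Finset.card_powersetCard, Finset.card_univ, Fintype.card_fin] at hcard
    exact_mod_cast hcard
  -- step 5
  have hm : (mSize n k : ℝ) = ∑ i ∈ Finset.Icc a b, (n.choose i : ℝ) := by
    rw [mSize]; push_cast; rfl
  have step5 : ((k:ℝ) - 1) - μ' * (mSize n k : ℝ)
      ≤ ∑ i ∈ Finset.range (n+1), (n.choose i : ℝ) * g i := by
    set J := Finset.Icc (a+1) (n - a - 1) with hJ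
    have hJsub : J ⊆ Finset.range (n+1) := by
      intro i hi
      rw [Finset.mem_Icc] at hi
      rw [Finset.mem_range]
      omega
    have hzero : ∀ i ∈ Finset.range (n+1), i ∉ J → (n.choose i : ℝ) * g i = 0 := by
      intro i hi hiJ
      rw [Finset.mem_range] at hi
      rw [Finset.mem_Icc] at hiJ
      have hCi_le : n.choose i ≤ n.choose a := by
        rcases le_or_gt i a with h | h
        · exact chooseMonoLeft n a i h han
        · have hni : n - i ≤ a := by omega
          have hin : i ≤ n := by omega
          rw [← Nat.choose_symm hin]
          exact chooseMonoLeft n a (n - i) hni han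
      have hCi_pos : (0:ℝ) < (n.choose i : ℝ) := by
        exact_mod_cast Nat.choose_pos (by omega : i ≤ n)
      have h1 : μ' ≤ ((n.choose i : ℝ))⁻¹ := by
        apply inv_anti₀ hCi_pos
        exact_mod_cast hCi_le
      have h2 : μ' ≤ ((n.choose d : ℝ))⁻¹ := by
        apply inv_anti₀
        · exact_mod_cast Nat.choose_pos (by omega : d ≤ n)
        · exact_mod_cast chooseMonoLeft n a d (by omega) han
      have : g i = 0 := by
        rw [hg]
        simp only
        rw [min_eq_left (by rw [le_sub_iff_add_le, zero_add]; exact le_min h1 h2)]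
      rw [this, mul_zero]
    rw [← Finset.sum_subset hJsub hzero]
    have hterm : ∀ i ∈ J, (n.choose i : ℝ) * g i = 1 - μ' * (n.choose i : ℝ) := by
      intro i hi
      rw [Finset.mem_Icc] at hi
      have hin : i ≤ n := by omega
      have hCaCi : n.choose a ≤ n.choose i := chooseLower n a i (by omega) (by omega)
      have hCdCi : n.choose d ≤ n.choose i := chooseLower n d i (by omega) (by omega)
      have hCi_pos : (0:ℝ) < (n.choose i : ℝ) := by
        exact_mod_cast Nat.choose_pos hin
      have hgi : g i = ((n.choose i : ℝ))⁻¹ - μ' := by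
        rw [hg]
        simp only
        rw [min_eq_left (inv_anti₀ (by exact_mod_cast Nat.choose_pos (by omega : d ≤ n))
          (by exact_mod_cast hCdCi))]
        rw [min_eq_right (by
          rw [sub_nonpos]
          exact inv_anti₀ hCa_pos (by exact_mod_cast hCaCi))]
      rw [hgi, mul_sub, mul_inv_cancel₀ (ne_of_gt hCi_pos), mul_comm]
    rw [Finset.sum_congr rfl hterm, Finset.sum_sub_distrib, Finset.sum_const, nsmul_eq_mul,
      mul_one, ← Finset.mul_sum, hm]
    -- now case analysis
    rcases Nat.even_or_odd (n + k) with he | ho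
    · obtain ⟨p, hp⟩ := he
      rcases Nat.eq_or_lt_of_le hk with hk2 | hk3
      · -- k = 2, even case : J is empty, Icc a b = {a}
        have hab2 : b = a := by omega
        have hJempty : J = ∅ := by
          rw [hJ]
          apply Finset.Icc_eq_empty
          omega
        have hIcc : Finset.Icc a b = {a} := by rw [hab2, Finset.Icc_self]
        rw [hJempty, hIcc, Finset.sum_singleton, Finset.card_empty, Finset.sum_empty]
        rw [← hk2]
        push_cast
        linarith [hμCa]
      · -- k ≥ 3 even case
        have hbna : b = n - a := by omega
        have hab' : a < b := by omega
        have hJ' : J = Finset.Icc (a+1) (b-1) := by rw [hJ]; congr 1; omega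
        have hsplit : Finset.Icc a b = Finset.Icc a ((b-1)+1) := by congr 1; omega
        have hsum1 : ∑ i ∈ Finset.Icc a b, (n.choose i : ℝ)
            = ∑ i ∈ Finset.Icc a (b-1), (n.choose i : ℝ) + (n.choose b : ℝ) := by
          have hb1 : b - 1 + 1 = b := by omega
          rw [hsplit, Finset.sum_Icc_succ_top (by omega), hb1]
        have hsum2 : ∑ i ∈ Finset.Icc a (b-1), (n.choose i : ℝ)
            = (n.choose a : ℝ) + ∑ i ∈ Finset.Icc (a+1) (b-1), (n.choose i : ℝ) := by
          rw [Finset.Icc_eq_cons_Ioc (by omega : a ≤ b - 1), Finset.sum_cons,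
            ← Finset.Icc_add_one_left_eq_Ioc]
        have hCb : (n.choose b : ℝ) = (n.choose a : ℝ) := by
          rw [hbna]
          exact_mod_cast Nat.choose_symm (by omega : a ≤ n)
        have hJcard : (J.card : ℝ) = (k : ℝ) - 3 := by
          rw [hJ', Nat.card_Icc]
          have : b - 1 + 1 - (a + 1) = k - 3 := by omega
          rw [this]
          have : ((k - 3 : ℕ) : ℝ) = (k:ℝ) - 3 := by
            have : (3:ℕ) ≤ k := hk3
            push_cast [Nat.cast_sub this]
            ring
          rw [this]
        rw [hsum1, hsum2, ← hJ', hJcard]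
        have hSJ : 0 ≤ ∑ i ∈ J, (n.choose i : ℝ) := by positivity
        nlinarith [hμCa, hCb]
    · -- odd case
      obtain ⟨p, hp⟩ := ho
      have hbna : n - a - 1 = b := by omega
      have hJ' : J = Finset.Ioc a b := by rw [hJ, hbna, Finset.Icc_add_one_left_eq_Ioc]
      have hsum : ∑ i ∈ Finset.Icc a b, (n.choose i : ℝ)
          = (n.choose a : ℝ) + ∑ i ∈ Finset.Ioc a b, (n.choose i : ℝ) := by
        rw [Finset.Icc_eq_cons_Ioc hab, Finset.sum_cons]
      have hJcard : (J.card : ℝ) = (k : ℝ) - 2 := by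
        rw [hJ', Nat.card_Ioc]
        have h1 : b - a = k - 2 := by omega
        rw [h1]
        push_cast [Nat.cast_sub hk]
        ring
      rw [← hJ'] at hsum
      rw [hsum, hJcard]
      nlinarith [hμCa]
  linarith [step2, step3 ▸ step4, step5]

end WeightTransferenceAux

/-- Transference between sizes and weights: if
`|𝓕₀| + Σᵢ αᵢ|𝓕ᵢ| ≥ m_{k-1} + t` with all `αᵢ > 0` and `t ∈ ℕ`, then
`w_k(𝓕₀) + (1 + 2k²/n)·Σᵢ αᵢ·w_k(𝓕ᵢ) ≥ k - 1 + t·C(n,⌊n/2⌋)⁻¹`. -/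

theorem weight_transference (n k : ℕ) (hk : 2 ≤ k) (hn : 4 * k ^ 2 ≤ n)
    (s : ℕ) (F0 : Finset (Finset (Fin n))) (F : Fin s → Finset (Finset (Fin n)))
    (α : Fin s → ℝ) (hα : ∀ i, 0 < α i) (t : ℕ)
    (hsum : (mSize n k : ℝ) + (t : ℝ) ≤ (F0.card : ℝ) + ∑ i, α i * ((F i).card : ℝ)) :
    (k : ℝ) - 1 + (t : ℝ) * ((n.choose (n / 2) : ℝ))⁻¹ ≤
      wkFam n k F0 + (1 + 2 * (k : ℝ) ^ 2 / (n : ℝ)) * ∑ i, α i * wkFam n k (F i) := by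
  have hkn : k ≤ n := by nlinarith
  have hn0 : 0 < n := by nlinarith
  have hn_pos : (0:ℝ) < (n:ℝ) := by exact_mod_cast hn0
  have hCc_pos : (0:ℝ) < (n.choose (n/2) : ℝ) := by
    exact_mod_cast Nat.choose_pos (Nat.div_le_self n 2)
  have hCa_pos : (0:ℝ) < (n.choose ((n - k + 2)/2) : ℝ) := by
    exact_mod_cast Nat.choose_pos (by omega : (n - k + 2)/2 ≤ n)
  set ε : ℝ := ((n.choose (n/2) : ℝ))⁻¹ with hε
  set μ' : ℝ := ((n.choose ((n - k + 2)/2) : ℝ))⁻¹ with hμ'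
  have hε_pos : 0 < ε := by positivity
  have hμ'_pos : 0 < μ' := by positivity
  have hμCa : μ' * (n.choose ((n - k + 2)/2) : ℝ) = 1 := inv_mul_cancel₀ (ne_of_gt hCa_pos)
  have hεμ' : ε ≤ μ' := by
    apply inv_anti₀ hCa_pos
    exact_mod_cast Nat.choose_le_middle ((n - k + 2)/2) n
  set T : ℝ := 1 + 2 * (k:ℝ)^2 / (n:ℝ) with hT
  have hT_pos : 0 < T := by positivity
  have hC : μ' ≤ T * ε := by
    have h1 := chooseRatio n k hk hn
    have h2 : μ' * (n.choose (n/2) : ℝ) ≤ T := by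
      calc μ' * (n.choose (n/2) : ℝ)
          ≤ μ' * (T * (n.choose ((n - k + 2)/2) : ℝ)) := by
            apply mul_le_mul_of_nonneg_left _ hμ'_pos.le
            rw [hT]; exact h1
        _ = T * (μ' * (n.choose ((n - k + 2)/2) : ℝ)) := by ring
        _ = T := by rw [hμCa, mul_one]
    have h3 := mul_le_mul_of_nonneg_right h2 hε_pos.le
    have h4 : μ' * (n.choose (n/2) : ℝ) * ε = μ' := by
      rw [mul_assoc, mul_inv_cancel₀ (ne_of_gt hCc_pos), mul_one]
    calc μ' = μ' * (n.choose (n/2) : ℝ) * ε := h4.symm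
      _ ≤ T * ε := h3
  set S : ℝ := ∑ i, α i * ((F i).card : ℝ) with hS
  set W : ℝ := ∑ i, α i * wkFam n k (F i) with hW
  have hS_nonneg : 0 ≤ S := by
    apply Finset.sum_nonneg
    intro i _
    exact mul_nonneg (hα i).le (Nat.cast_nonneg _)
  have hεS : ε * S ≤ W := by
    rw [hS, hW, Finset.mul_sum]
    apply Finset.sum_le_sum
    intro i _
    rw [show ε * (α i * ((F i).card : ℝ)) = α i * (ε * ((F i).card : ℝ)) by ring]
    exact mul_le_mul_of_nonneg_left (wkFam_ge_card n k (F i)) (hα i).le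
  have g1 : μ' * S ≤ T * W := by
    calc μ' * S ≤ (T * ε) * S := mul_le_mul_of_nonneg_right hC hS_nonneg
      _ = T * (ε * S) := by ring
      _ ≤ T * W := mul_le_mul_of_nonneg_left hεS hT_pos.le
  have f1 := lemA n k hk hn F0
  have g2 : μ' * (mSize n k : ℝ) + μ' * (t:ℝ) ≤ μ' * (F0.card : ℝ) + μ' * S := by
    nlinarith [mul_le_mul_of_nonneg_left hsum hμ'_pos.le]
  have g3 : (t:ℝ) * ε ≤ μ' * (t:ℝ) := by
    nlinarith [mul_le_mul_of_nonneg_right hεμ' (Nat.cast_nonneg (α := ℝ) t)]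
  linarith [f1, g1, g2, g3]
end

section
/- If 𝓕 is a family of subsets of [n] that does not contain the full set [n], then Σ_{F ∈ 𝓕} C(n,|F|)⁻¹·(1 - d⁺(F,𝓕)/(n - |F|)) ≤ 1, where d⁺(F,𝓕) is the number of sets G ∈ 𝓕 with F ⊊ G. -/
set_option maxHeartbeats 1000000

section LymAux
open Finset Nat
open Finset Nat

section PermFiber
variable {α β : Type*} [Fintype α] [DecidableEq α] [DecidableEq β]

noncomputable def permFiberEquiv (f g : α → β) :
    {σ : Equiv.Perm α // ∀ x, g (σ x) = f x} ≃ (∀ y, {x // f x = y} ≃ {x // g x = y}) where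
  toFun σ y := Equiv.subtypeEquiv σ.1 (fun x => by rw [← σ.2 x])
  invFun e := by
    have key : ∀ (y : β) (x : α) (hx : f x = y),
        ((e y ⟨x, hx⟩ : {z // g z = y}) : α) = ((e (f x) ⟨x, rfl⟩ : {z // g z = f x}) : α) := by
      intro y x hx; subst hx; rfl
    refine ⟨Equiv.ofBijective (fun x => ((e (f x) ⟨x, rfl⟩ : {z // g z = f x}) : α))
      (Finite.injective_iff_bijective.mp ?_), fun x => (e (f x) ⟨x, rfl⟩).2⟩
    intro x x' hxx'
    have hxx'' : ((e (f x) ⟨x, rfl⟩ : {z // g z = f x}) : α)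
        = ((e (f x') ⟨x', rfl⟩ : {z // g z = f x'}) : α) := hxx'
    have hf : f x = f x' := by
      rw [← (e (f x) ⟨x, rfl⟩).2, ← (e (f x') ⟨x', rfl⟩).2, hxx'']
    have hk := key (f x) x' hf.symm
    rw [← hk] at hxx''
    have h2 := (e (f x)).injective (Subtype.ext hxx'')
    exact congrArg Subtype.val h2
  left_inv σ := by
    apply Subtype.ext; apply Equiv.ext; intro x; rfl
  right_inv e := by
    funext y; apply Equiv.ext; rintro ⟨x, hx⟩
    apply Subtype.ext
    show ((e (f x) ⟨x, rfl⟩ : {z // g z = f x}) : α) = _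
    subst hx; rfl

lemma card_perm_fiber [Fintype β] (f g : α → β)
    (h : ∀ y, Fintype.card {x // f x = y} = Fintype.card {x // g x = y}) :
    Fintype.card {σ : Equiv.Perm α // ∀ x, g (σ x) = f x} =
      ∏ y : β, (Fintype.card {x // f x = y}) ! := by
  rw [Fintype.card_congr (permFiberEquiv f g), Fintype.card_pi]
  exact Finset.prod_congr rfl fun y _ =>
    Fintype.card_equiv (Fintype.equivOfCardEq (h y))

end PermFiber
open Finset Nat


lemma card_val_interval (n l u : ℕ) (hl : l ≤ u) (hu : u ≤ n) :
    Fintype.card {x : Fin n // l ≤ (x : ℕ) ∧ (x : ℕ) < u} = u - l := by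
  rw [← Fintype.card_fin (u - l)]
  apply Fintype.card_congr
  exact {
    toFun := fun x => ⟨x.1.1 - l, by have := x.2; omega⟩
    invFun := fun i => ⟨⟨i.1 + l, by have := i.2; omega⟩,
      by have := i.2; simp only [Fin.val_mk]; omega⟩
    left_inv := fun x => by
      apply Subtype.ext; apply Fin.ext; have := x.2; simp; omega
    right_inv := fun i => by apply Fin.ext; simp }

lemma card_val_lt (n u : ℕ) (hu : u ≤ n) :
    Fintype.card {x : Fin n // (x : ℕ) < u} = u := by
  have h := card_val_interval n 0 u (Nat.zero_le u) hu
  have e : Fintype.card {x : Fin n // (x : ℕ) < u}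
      = Fintype.card {x : Fin n // 0 ≤ (x : ℕ) ∧ (x : ℕ) < u} :=
    Fintype.card_congr (Equiv.subtypeEquivRight (fun x => by omega))
  omega

lemma card_val_ge (n l : ℕ) (hl : l ≤ n) :
    Fintype.card {x : Fin n // ¬ (x : ℕ) < l} = n - l := by
  have h := card_val_interval n l n hl le_rfl
  have e : Fintype.card {x : Fin n // ¬ (x : ℕ) < l}
      = Fintype.card {x : Fin n // l ≤ (x : ℕ) ∧ (x : ℕ) < n} :=
    Fintype.card_congr (Equiv.subtypeEquivRight (fun x => by
      have := x.isLt; omega))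
  omega

lemma card_mem_true {n : ℕ} (A : Finset (Fin n)) :
    Fintype.card {x : Fin n // decide (x ∈ A) = true} = A.card := by
  have e : Fintype.card {x : Fin n // decide (x ∈ A) = true}
      = Fintype.card {x : Fin n // x ∈ A} :=
    Fintype.card_congr (Equiv.subtypeEquivRight (fun x => by simp))
  exact e.trans (Fintype.card_coe A)

lemma card_mem_false {n : ℕ} (A : Finset (Fin n)) :
    Fintype.card {x : Fin n // decide (x ∈ A) = false} = n - A.card := by
  have e : Fintype.card {x : Fin n // decide (x ∈ A) = false}
      = Fintype.card {x : Fin n // x ∈ Aᶜ} :=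
    Fintype.card_congr (Equiv.subtypeEquivRight (fun x => by simp))
  rw [e]
  refine (Fintype.card_coe _).trans ?_
  rw [card_compl]
  simp

-- count of permutations realizing A as an initial segment
lemma count_single {n : ℕ} (A : Finset (Fin n)) :
    (univ.filter fun σ : Equiv.Perm (Fin n) =>
        ∀ x, x ∈ A ↔ ((σ x : ℕ) < A.card)).card = (A.card) ! * (n - A.card) ! := by
  have hA : A.card ≤ n := by simpa using card_le_card (subset_univ A)
  classical
  have hiff : ∀ σ : Equiv.Perm (Fin n),
      (∀ x, x ∈ A ↔ ((σ x : ℕ) < A.card)) ↔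
        (∀ x, decide ((σ x : ℕ) < A.card) = decide (x ∈ A)) := by
    intro σ
    constructor
    · intro h x; simp only [decide_eq_decide]; exact (h x).symm
    · intro h x; have := h x; simp only [decide_eq_decide] at this; exact this.symm
  have key := card_perm_fiber (fun x : Fin n => decide (x ∈ A))
      (fun x : Fin n => decide ((x : ℕ) < A.card)) ?_
  · calc (univ.filter fun σ : Equiv.Perm (Fin n) =>
        ∀ x, x ∈ A ↔ ((σ x : ℕ) < A.card)).card
        = Fintype.card {σ : Equiv.Perm (Fin n) //
            ∀ x, x ∈ A ↔ ((σ x : ℕ) < A.card)} := (Fintype.card_subtype _).symm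
      _ = Fintype.card {σ : Equiv.Perm (Fin n) //
            ∀ x, decide ((σ x : ℕ) < A.card) = decide (x ∈ A)} :=
          Fintype.card_congr (Equiv.subtypeEquivRight hiff)
      _ = ∏ y : Bool, (Fintype.card {x : Fin n // decide (x ∈ A) = y}) ! := by convert key
      _ = (A.card) ! * (n - A.card) ! := by
          rw [Fintype.prod_bool, card_mem_true, card_mem_false, mul_comm]
  · intro y
    cases y with
    | true =>
      rw [card_mem_true]
      have e : Fintype.card {x : Fin n // decide ((x:ℕ) < A.card) = true}
          = Fintype.card {x : Fin n // (x:ℕ) < A.card} :=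
        Fintype.card_congr (Equiv.subtypeEquivRight (fun x => by simp))
      rw [e, card_val_lt n A.card hA]
    | false =>
      rw [card_mem_false]
      have e : Fintype.card {x : Fin n // decide ((x:ℕ) < A.card) = false}
          = Fintype.card {x : Fin n // ¬ (x:ℕ) < A.card} :=
        Fintype.card_congr (Equiv.subtypeEquivRight (fun x => by simp))
      rw [e, card_val_ge n A.card hA]
open Finset Nat

lemma count_pair {n : ℕ} {A B : Finset (Fin n)} (hAB : A ⊆ B) :
    (univ.filter fun σ : Equiv.Perm (Fin n) =>
        (∀ x, x ∈ A ↔ ((σ x : ℕ) < A.card)) ∧ (∀ x, x ∈ B ↔ ((σ x : ℕ) < B.card))).card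
      = (A.card) ! * ((B.card - A.card) ! * (n - B.card) !) := by
  classical
  have hB : B.card ≤ n := by simpa using card_le_card (subset_univ B)
  have hab : A.card ≤ B.card := card_le_card hAB
  set a := A.card with ha
  set b := B.card with hb
  set f : Fin n → Fin 3 := fun x => if x ∈ A then 0 else if x ∈ B then 1 else 2 with hf
  set g : Fin n → Fin 3 := fun x => if (x : ℕ) < a then 0 else if (x : ℕ) < b then 1 else 2 with hg
  -- fiber cards of f
  have hf0 : Fintype.card {x : Fin n // f x = 0} = a := by
    have e : Fintype.card {x : Fin n // f x = 0} = Fintype.card {x : Fin n // x ∈ A} :=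
      Fintype.card_congr (Equiv.subtypeEquivRight (fun x => by
        by_cases h1 : x ∈ A <;> by_cases h2 : x ∈ B <;>
          simp [hf, h1, h2] <;> first | decide | exact h2 (hAB h1)))
    exact e.trans (Fintype.card_coe A)
  have hf1 : Fintype.card {x : Fin n // f x = 1} = b - a := by
    have e : Fintype.card {x : Fin n // f x = 1} = Fintype.card {x : Fin n // x ∈ B \ A} :=
      Fintype.card_congr (Equiv.subtypeEquivRight (fun x => by
        by_cases h1 : x ∈ A <;> by_cases h2 : x ∈ B <;>
          simp [hf, h1, h2] <;> first | decide | exact h2 (hAB h1)))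
    rw [e, Fintype.card_coe, card_sdiff_of_subset hAB]
  have hf2 : Fintype.card {x : Fin n // f x = 2} = n - b := by
    have e : Fintype.card {x : Fin n // f x = 2} = Fintype.card {x : Fin n // x ∈ Bᶜ} :=
      Fintype.card_congr (Equiv.subtypeEquivRight (fun x => by
        by_cases h1 : x ∈ A <;> by_cases h2 : x ∈ B <;>
          simp [hf, h1, h2] <;> first | decide | exact h2 (hAB h1)))
    rw [e, Fintype.card_coe, card_compl]
    simp [hb]
  -- fiber cards of g
  have hg0 : Fintype.card {x : Fin n // g x = 0} = a := by
    have e : Fintype.card {x : Fin n // g x = 0}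
        = Fintype.card {x : Fin n // 0 ≤ (x : ℕ) ∧ (x : ℕ) < a} :=
      Fintype.card_congr (Equiv.subtypeEquivRight (fun x => by
        by_cases h1 : (x : ℕ) < a <;> by_cases h2 : (x : ℕ) < b <;>
          simp [hg, h1, h2] <;> omega))
    rw [e, card_val_interval n 0 a (by omega) (by omega)]
    omega
  have hg1 : Fintype.card {x : Fin n // g x = 1} = b - a := by
    have e : Fintype.card {x : Fin n // g x = 1}
        = Fintype.card {x : Fin n // a ≤ (x : ℕ) ∧ (x : ℕ) < b} :=
      Fintype.card_congr (Equiv.subtypeEquivRight (fun x => by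
        by_cases h1 : (x : ℕ) < a <;> by_cases h2 : (x : ℕ) < b <;>
          simp [hg, h1, h2] <;> omega))
    rw [e, card_val_interval n a b hab hB]
  have hg2 : Fintype.card {x : Fin n // g x = 2} = n - b := by
    have e : Fintype.card {x : Fin n // g x = 2}
        = Fintype.card {x : Fin n // b ≤ (x : ℕ) ∧ (x : ℕ) < n} :=
      Fintype.card_congr (Equiv.subtypeEquivRight (fun x => by
        have hlt := x.isLt
        by_cases h1 : (x : ℕ) < a <;> by_cases h2 : (x : ℕ) < b <;>
          simp [hg, h1, h2] <;> omega))
    rw [e, card_val_interval n b n hB le_rfl]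
  have key := card_perm_fiber f g ?_
  · have hiff : ∀ σ : Equiv.Perm (Fin n),
        ((∀ x, x ∈ A ↔ ((σ x : ℕ) < a)) ∧ (∀ x, x ∈ B ↔ ((σ x : ℕ) < b))) ↔
          (∀ x, g (σ x) = f x) := by
      intro σ
      constructor
      · rintro ⟨h1, h2⟩ x
        simp only [hf, hg]
        by_cases hxA : x ∈ A
        · rw [if_pos hxA, if_pos ((h1 x).mp hxA)]
        · rw [if_neg hxA, if_neg (fun h => hxA ((h1 x).mpr h))]
          by_cases hxB : x ∈ B
          · rw [if_pos hxB, if_pos ((h2 x).mp hxB)]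
          · rw [if_neg hxB, if_neg (fun h => hxB ((h2 x).mpr h))]
      · intro h
        have hmain : ∀ x, (x ∈ A ↔ ((σ x : ℕ) < a)) ∧ (x ∈ B ↔ ((σ x : ℕ) < b)) := by
          intro x
          have hx := h x
          simp only [hf, hg] at hx
          by_cases h1 : x ∈ A <;> by_cases h2 : x ∈ B <;>
            by_cases h3 : ((σ x : ℕ) < a) <;> by_cases h4 : ((σ x : ℕ) < b) <;>
            (try simp only [h1, h2, h3, h4, if_true, if_false] at hx) <;>
            first
              | exact absurd (hAB h1) h2
              | exact absurd hx (by decide)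
              | exact absurd (lt_of_lt_of_le h3 hab) h4
              | (constructor <;> constructor <;> intro <;> first | assumption | omega)
              | simp [h1, h2, h3, h4]
              | (exfalso; omega)
        exact ⟨fun x => (hmain x).1, fun x => (hmain x).2⟩
    calc (univ.filter fun σ : Equiv.Perm (Fin n) =>
        (∀ x, x ∈ A ↔ ((σ x : ℕ) < a)) ∧ (∀ x, x ∈ B ↔ ((σ x : ℕ) < b))).card
        = Fintype.card {σ : Equiv.Perm (Fin n) //
            (∀ x, x ∈ A ↔ ((σ x : ℕ) < a)) ∧ (∀ x, x ∈ B ↔ ((σ x : ℕ) < b))} :=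
          (Fintype.card_subtype _).symm
      _ = Fintype.card {σ : Equiv.Perm (Fin n) // ∀ x, g (σ x) = f x} :=
          Fintype.card_congr (Equiv.subtypeEquivRight hiff)
      _ = ∏ y : Fin 3, (Fintype.card {x : Fin n // f x = y}) ! := by convert key
      _ = a ! * ((b - a) ! * (n - b) !) := by
          rw [Fin.prod_univ_three, hf0, hf1, hf2, mul_assoc]
  · intro y
    fin_cases y
    · exact hf0.trans hg0.symm
    · exact hf1.trans hg1.symm
    · exact hf2.trans hg2.symm
open Finset Nat

lemma le_choose_self (s t : ℕ) (hs : 1 ≤ s) (ht : 1 ≤ t) : s + t ≤ (s + t).choose s := by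
  have h1 : s.choose (s - 1) = s := by
    have := Nat.choose_symm (n := s) (k := 1) hs
    simpa [Nat.choose_one_right] using this
  have h2 : s ≤ (s + t - 1).choose (s - 1) := by
    calc s = s.choose (s - 1) := h1.symm
      _ ≤ (s + t - 1).choose (s - 1) := Nat.choose_le_choose _ (by omega)
  have h3 : (s + t) * ((s + t - 1).choose (s - 1)) = (s + t).choose s * s := by
    have h := Nat.add_one_mul_choose_eq (s + t - 1) (s - 1)
    have e1 : s + t - 1 + 1 = s + t := by omega
    have e2 : s - 1 + 1 = s := by omega
    rwa [e1, e2] at h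
  have h4 : (s + t) * s ≤ (s + t).choose s * s := by
    calc (s + t) * s ≤ (s + t) * ((s + t - 1).choose (s - 1)) :=
          Nat.mul_le_mul_left _ h2
      _ = (s + t).choose s * s := h3
  exact Nat.le_of_mul_le_mul_right h4 (by omega)

lemma fact_fact_le (s t : ℕ) (hs : 1 ≤ s) (ht : 1 ≤ t) :
    s ! * t ! ≤ (s + t - 1) ! := by
  have hc : (s + t).choose s * s ! * t ! = (s + t) ! := by
    have := Nat.choose_mul_factorial_mul_factorial (Nat.le_add_right s t)
    rwa [Nat.add_sub_cancel_left] at this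
  have hf : (s + t) ! = (s + t) * (s + t - 1) ! := by
    have := Nat.mul_factorial_pred (n := s + t) (by omega)
    omega
  have h4 : s ! * t ! * (s + t) ≤ (s + t - 1) ! * (s + t) := by
    calc s ! * t ! * (s + t) ≤ s ! * t ! * ((s + t).choose s) := by
          exact Nat.mul_le_mul_left _ (le_choose_self s t hs ht)
      _ = (s + t).choose s * s ! * t ! := by ring
      _ = (s + t) ! := hc
      _ = (s + t - 1) ! * (s + t) := by rw [hf]; ring
  exact Nat.le_of_mul_le_mul_right h4 (by omega)
open Finset Nat

def goodPerms {n : ℕ} (F : Finset (Finset (Fin n))) (A : Finset (Fin n)) :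
    Finset (Equiv.Perm (Fin n)) :=
  univ.filter fun σ => (∀ x, x ∈ A ↔ ((σ x : ℕ) < A.card)) ∧
    ∀ G ∈ F, A ⊂ G → ¬ (∀ x, x ∈ G ↔ ((σ x : ℕ) < G.card))

lemma mem_goodPerms {n : ℕ} {F : Finset (Finset (Fin n))} {A : Finset (Fin n)}
    {σ : Equiv.Perm (Fin n)} :
    σ ∈ goodPerms F A ↔ (∀ x, x ∈ A ↔ ((σ x : ℕ) < A.card)) ∧
      ∀ G ∈ F, A ⊂ G → ¬ (∀ x, x ∈ G ↔ ((σ x : ℕ) < G.card)) := by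
  simp [goodPerms]


end LymAux

open Finset Nat in
/-- LYM-type inequality: if `𝓕 ⊆ 2^[n]` does not contain `[n]`, then
`Σ_{F ∈ 𝓕} C(n,|F|)⁻¹·(1 - d⁺(F,𝓕)/(n-|F|)) ≤ 1`. -/
theorem lym_variant (n : ℕ) (F : Finset (Finset (Fin n)))
    (hF : (Finset.univ : Finset (Fin n)) ∉ F) :
    ∑ A ∈ F, ((n.choose A.card : ℝ))⁻¹ *
      (1 - ((F.filter fun G => A ⊂ G).card : ℝ) / ((n : ℝ) - (A.card : ℝ))) ≤ 1 := by
  classical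
  have hcardlt : ∀ A ∈ F, A.card < n := by
    intro A hA
    have hne : A ≠ (Finset.univ : Finset (Fin n)) := fun h => hF (h ▸ hA)
    have := Finset.card_lt_card (Finset.ssubset_univ_iff.mpr hne)
    simpa using this
  have hnfpos : (0 : ℝ) < (n ! : ℝ) := by exact_mod_cast Nat.factorial_pos n
  -- Step 1 : disjointness of the good sets
  have hdisj : ∀ A ∈ F, ∀ B ∈ F, A ≠ B → Disjoint (goodPerms F A) (goodPerms F B) := by
    intro A hA B hB hne
    rw [Finset.disjoint_left]
    intro σ hσA hσB
    obtain ⟨hcA, hmA⟩ := mem_goodPerms.mp hσA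
    obtain ⟨hcB, hmB⟩ := mem_goodPerms.mp hσB
    rcases Nat.lt_trichotomy A.card B.card with hlt | heq | hgt
    · have hsub : A ⊆ B := fun x hx => (hcB x).mpr (lt_of_lt_of_le ((hcA x).mp hx) hlt.le)
      have hss : A ⊂ B := Finset.ssubset_iff_subset_ne.mpr ⟨hsub, hne⟩
      exact hmA B hB hss hcB
    · apply hne
      ext x
      rw [hcA x, hcB x, heq]
    · have hsub : B ⊆ A := fun x hx => (hcA x).mpr (lt_of_lt_of_le ((hcB x).mp hx) hgt.le)
      have hss : B ⊂ A := Finset.ssubset_iff_subset_ne.mpr ⟨hsub, hne.symm⟩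
      exact hmB A hA hss hcA
  -- Step 2 : the good sets nearly fill the space of chains
  have hsum : ∑ A ∈ F, (goodPerms F A).card ≤ n ! := by
    calc ∑ A ∈ F, (goodPerms F A).card = (F.biUnion (goodPerms F)).card :=
          (Finset.card_biUnion hdisj).symm
      _ ≤ (univ : Finset (Equiv.Perm (Fin n))).card := card_le_card (subset_univ _)
      _ = n ! := by rw [Finset.card_univ, Fintype.card_perm, Fintype.card_fin]
  -- Step 3 : per-set counting inequality (natural numbers)
  have hmain : ∀ A ∈ F, (A.card) ! * (n - A.card) ! ≤ (goodPerms F A).card +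
      (F.filter fun G => A ⊂ G).card * ((A.card) ! * (n - A.card - 1) !) := by
    intro A hA
    have hAn : A.card < n := hcardlt A hA
    have hsub : (univ.filter fun σ : Equiv.Perm (Fin n) =>
          ∀ x, x ∈ A ↔ ((σ x : ℕ) < A.card)) ⊆
        goodPerms F A ∪ (F.filter fun G => A ⊂ G).biUnion (fun B =>
          univ.filter fun σ : Equiv.Perm (Fin n) =>
            (∀ x, x ∈ A ↔ ((σ x : ℕ) < A.card)) ∧
              (∀ x, x ∈ B ↔ ((σ x : ℕ) < B.card))) := by
      intro σ hσ
      rw [mem_filter] at hσ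
      obtain ⟨-, hσ⟩ := hσ
      by_cases hg : ∀ G ∈ F, A ⊂ G → ¬ (∀ x, x ∈ G ↔ ((σ x : ℕ) < G.card))
      · exact mem_union_left _ (mem_goodPerms.mpr ⟨hσ, hg⟩)
      · push_neg at hg
        obtain ⟨G, hG, hAG, hchain⟩ := hg
        refine mem_union_right _ (mem_biUnion.mpr ⟨G, mem_filter.mpr ⟨hG, hAG⟩, ?_⟩)
        exact mem_filter.mpr ⟨mem_univ _, hσ, hchain⟩
    calc (A.card) ! * (n - A.card) !
        = (univ.filter fun σ : Equiv.Perm (Fin n) =>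
            ∀ x, x ∈ A ↔ ((σ x : ℕ) < A.card)).card := (count_single A).symm
      _ ≤ (goodPerms F A ∪ (F.filter fun G => A ⊂ G).biUnion (fun B =>
            univ.filter fun σ : Equiv.Perm (Fin n) =>
              (∀ x, x ∈ A ↔ ((σ x : ℕ) < A.card)) ∧
                (∀ x, x ∈ B ↔ ((σ x : ℕ) < B.card)))).card := card_le_card hsub
      _ ≤ (goodPerms F A).card + ((F.filter fun G => A ⊂ G).biUnion (fun B =>
            univ.filter fun σ : Equiv.Perm (Fin n) =>
              (∀ x, x ∈ A ↔ ((σ x : ℕ) < A.card)) ∧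
                (∀ x, x ∈ B ↔ ((σ x : ℕ) < B.card)))).card := card_union_le _ _
      _ ≤ (goodPerms F A).card + ∑ B ∈ F.filter (fun G => A ⊂ G),
            (univ.filter fun σ : Equiv.Perm (Fin n) =>
              (∀ x, x ∈ A ↔ ((σ x : ℕ) < A.card)) ∧
                (∀ x, x ∈ B ↔ ((σ x : ℕ) < B.card))).card :=
          Nat.add_le_add_left (card_biUnion_le) _
      _ ≤ (goodPerms F A).card + ∑ B ∈ F.filter (fun G => A ⊂ G),
            ((A.card) ! * (n - A.card - 1) !) := by
          refine Nat.add_le_add_left (Finset.sum_le_sum ?_) _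
          intro B hB
          rw [mem_filter] at hB
          obtain ⟨hBF, hAB⟩ := hB
          have hBn : B.card < n := hcardlt B hBF
          have hab : A.card < B.card := Finset.card_lt_card hAB
          rw [count_pair hAB.subset]
          refine Nat.mul_le_mul_left _ ?_
          have h1 := fact_fact_le (B.card - A.card) (n - B.card) (by omega) (by omega)
          have h2 : B.card - A.card + (n - B.card) - 1 = n - A.card - 1 := by omega
          rwa [h2] at h1
      _ = (goodPerms F A).card +
            (F.filter fun G => A ⊂ G).card * ((A.card) ! * (n - A.card - 1) !) := by
          rw [Finset.sum_const, smul_eq_mul]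
  -- Step 4 : real-number per-set inequality
  have hreal : ∀ A ∈ F, ((n.choose A.card : ℝ))⁻¹ *
      (1 - ((F.filter fun G => A ⊂ G).card : ℝ) / ((n : ℝ) - (A.card : ℝ)))
      ≤ ((goodPerms F A).card : ℝ) / (n ! : ℝ) := by
    intro A hA
    have hAn : A.card < n := hcardlt A hA
    set a := A.card with ha
    set d := (F.filter fun G => A ⊂ G).card with hd
    have hcpos : (0 : ℝ) < (n.choose a : ℝ) := by
      exact_mod_cast Nat.choose_pos hAn.le
    have hm : (0 : ℝ) < (n : ℝ) - (a : ℝ) := by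
      have : (a : ℝ) < (n : ℝ) := by exact_mod_cast hAn
      linarith
    have hna : ((n - a : ℕ) : ℝ) = (n : ℝ) - (a : ℝ) := by
      have : a ≤ n := hAn.le
      push_cast [this]
      ring
    have hfac2 : (((n - a) ! : ℕ) : ℝ) = ((n : ℝ) - (a : ℝ)) * (((n - a - 1) ! : ℕ) : ℝ) := by
      rw [← hna]
      have h := Nat.mul_factorial_pred (n := n - a) (by omega)
      have : ((n - a) * (n - a - 1) ! : ℕ) = ((n - a) ! : ℕ) := h
      exact_mod_cast this.symm
    have h1 : (n.choose a : ℝ) * ((a ! : ℝ) * (((n - a) ! : ℕ) : ℝ)) = (n ! : ℝ) := by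
      have := Nat.choose_mul_factorial_mul_factorial hAn.le
      exact_mod_cast by rw [← this]; push_cast; ring
    have key2 : (a ! : ℝ) * (((n - a) ! : ℕ) : ℝ) -
        (d : ℝ) * ((a ! : ℝ) * (((n - a - 1) ! : ℕ) : ℝ))
        ≤ ((goodPerms F A).card : ℝ) := by
      have h := hmain A hA
      have hcast : ((a ! * (n - a) ! : ℕ) : ℝ) ≤
          (((goodPerms F A).card : ℕ) : ℝ) + ((d * (a ! * (n - a - 1) !) : ℕ) : ℝ) := by
        exact_mod_cast h
      push_cast at hcast
      linarith
    have e1 : ((n.choose a : ℝ))⁻¹ * (1 - (d : ℝ) / ((n : ℝ) - (a : ℝ)))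
        = (((n : ℝ) - (a : ℝ)) - (d : ℝ)) * ((a ! : ℝ) * (((n - a - 1) ! : ℕ) : ℝ))
          / (n ! : ℝ) := by
      rw [← h1, hfac2]
      field_simp
    rw [e1]
    gcongr
    calc ((n : ℝ) - (a : ℝ) - (d : ℝ)) * ((a ! : ℝ) * (((n - a - 1) ! : ℕ) : ℝ))
        = (a ! : ℝ) * (((n - a) ! : ℕ) : ℝ) -
            (d : ℝ) * ((a ! : ℝ) * (((n - a - 1) ! : ℕ) : ℝ)) := by
          rw [hfac2]; ring
      _ ≤ _ := key2
  -- Step 5 : conclusion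
  calc ∑ A ∈ F, ((n.choose A.card : ℝ))⁻¹ *
      (1 - ((F.filter fun G => A ⊂ G).card : ℝ) / ((n : ℝ) - (A.card : ℝ)))
      ≤ ∑ A ∈ F, ((goodPerms F A).card : ℝ) / (n ! : ℝ) := Finset.sum_le_sum hreal
    _ = (∑ A ∈ F, ((goodPerms F A).card : ℝ)) / (n ! : ℝ) := by rw [Finset.sum_div]
    _ ≤ (n ! : ℝ) / (n ! : ℝ) := by
        gcongr
        exact_mod_cast hsum
    _ = 1 := div_self hnfpos.ne'
end

section
/- For every positive integer n and every family 𝓕 ⊆ 2^[n], the number of (2,2)-colourings of 𝓕 is at most 2^(C(n,⌊n/2⌋)). -/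
lemma fin2_eq {a b x : Fin 2} (ha : a ≠ x) (hb : b ≠ x) : a = b := by omega

lemma colour_ne {n : ℕ} {F : Finset (Finset (Fin n))} {c : {A // A ∈ F} → Fin 2}
    (hc : IsRKColouring 2 F c) {A B : {A // A ∈ F}}
    (h : (A : Finset (Fin n)) ⊂ (B : Finset (Fin n))) : c A ≠ c B := by
  obtain ⟨i, j, hij⟩ := hc ![A, B] (by
    intro i j hlt
    fin_cases i <;> fin_cases j <;> simp_all)
  fin_cases i <;> fin_cases j <;> simp_all <;> exact fun e => hij e.symm

/-- For every positive `n` and family `𝓕 ⊆ 2^[n]`, the number of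
`(2,2)`-colourings of `𝓕` is at most `2^(C(n,⌊n/2⌋))`. -/
theorem two_two_colourings_upper (n : ℕ) (hn : 0 < n) (F : Finset (Finset (Fin n))) :
    numColourings 2 2 n F ≤ 2 ^ (n.choose (n / 2)) := by
  classical
  -- the set of minimal elements of `F`
  set M : Finset (Finset (Fin n)) := F.filter (fun A => ∀ B ∈ F, ¬ B ⊂ A) with hM
  -- `M` is an antichain
  have hMantichain : IsAntichain (· ⊆ ·) (M : Set (Finset (Fin n))) := by
    intro A hA B hB hne hAB
    simp only [hM, Finset.coe_filter, Set.mem_setOf_eq] at hA hB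
    exact hB.2 A hA.1 (lt_of_le_of_ne hAB hne)
  have hMcard : M.card ≤ n.choose (n / 2) := by
    have := IsAntichain.sperner hMantichain
    simpa using this
  -- a colouring is determined by its restriction to `M`
  have hinj : Function.Injective
      (fun c : {c : {A // A ∈ F} → Fin 2 // IsRKColouring 2 F c} =>
        fun A : {A // A ∈ M} => c.1 ⟨A.1, (Finset.mem_filter.mp A.2).1⟩) := by
    rintro ⟨c, hc⟩ ⟨c', hc'⟩ h
    simp only [Subtype.mk.injEq]
    funext B
    obtain ⟨Bv, hBv⟩ := B
    by_cases hBM : Bv ∈ M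
    · exact congrFun h ⟨Bv, hBM⟩
    · -- `Bv` is not minimal, so there is `A ∈ F` with `A ⊂ Bv`
      simp only [hM, Finset.mem_filter, hBv, true_and, not_forall] at hBM
      obtain ⟨A, hAF, hAB⟩ := hBM
      rw [not_not] at hAB
      -- `A` itself must be minimal, otherwise there is a 3-chain and `c` can't exist
      have hAM : A ∈ M := by
        rw [hM, Finset.mem_filter]
        refine ⟨hAF, fun A' hA'F hA'A => ?_⟩
        have h1 : c ⟨A', hA'F⟩ ≠ c ⟨A, hAF⟩ := colour_ne hc hA'A
        have h2 : c ⟨A, hAF⟩ ≠ c ⟨Bv, hBv⟩ := colour_ne hc hAB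
        have h3 : c ⟨A', hA'F⟩ ≠ c ⟨Bv, hBv⟩ := colour_ne hc (hA'A.trans hAB)
        omega
      have hcc' : c ⟨A, hAF⟩ = c' ⟨A, hAF⟩ := congrFun h ⟨A, hAM⟩
      have h1 : c ⟨Bv, hBv⟩ ≠ c ⟨A, hAF⟩ := (colour_ne hc hAB).symm
      have h2 : c' ⟨Bv, hBv⟩ ≠ c ⟨A, hAF⟩ := hcc' ▸ (colour_ne hc' hAB).symm
      exact fin2_eq h1 h2
  calc numColourings 2 2 n F ≤ Nat.card ({A // A ∈ M} → Fin 2) :=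
        Nat.card_le_card_of_injective _ hinj
    _ = 2 ^ M.card := by
        simp [Nat.card_eq_fintype_card, Fintype.card_fun]
    _ ≤ 2 ^ (n.choose (n / 2)) := Nat.pow_le_pow_right (by norm_num) hMcard
end

section
/- There is an integer m₀ such that for every integer m ≥ m₀ the following holds with n = 2m+1: the family 𝓕 consisting of all m-element subsets and all (m+1)-element subsets of [n] has strictly more than 4^(C(n,m)) (4,2)-colourings. In particular, since C(n,m) = C(n,⌊n/2⌋), the family 𝓕 admits more (4,2)-colourings than any antichain in 2^[n]. -/
open Finset in
lemma antichain_numColourings {n r : ℕ} (G : Finset (Finset (Fin n)))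
    (hG : IsAntichain (· ⊆ ·) (G : Set (Finset (Fin n)))) :
    numColourings r 2 n G = r ^ G.card := by
  have hall : ∀ c : {A // A ∈ G} → Fin r, IsRKColouring 2 G c := by
    intro c ch hch
    exfalso
    have h01 : (ch 0 : Finset (Fin n)) ⊂ (ch 1 : Finset (Fin n)) := hch 0 1 (by decide)
    exact hG (ch 0).2 (ch 1).2 (fun h => h01.ne h) h01.subset
  rw [numColourings, Nat.card_congr (Equiv.subtypeUnivEquiv hall),
    Nat.card_eq_fintype_card, Fintype.card_fun, Fintype.card_coe, Fintype.card_fin]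

open Finset in
lemma two_levels_lower (m : ℕ) :
    4 ^ ((2 * m + 1).choose m) <
      numColourings 4 2 (2 * m + 1)
        (Finset.powersetCard m (Finset.univ : Finset (Fin (2 * m + 1))) ∪
          Finset.powersetCard (m + 1) (Finset.univ : Finset (Fin (2 * m + 1)))) := by
  set n := 2 * m + 1 with hn
  set F : Finset (Finset (Fin n)) :=
    Finset.powersetCard m (Finset.univ : Finset (Fin n)) ∪
      Finset.powersetCard (m + 1) (Finset.univ : Finset (Fin n)) with hF
  have hmem : ∀ A : Finset (Fin n), A ∈ F → A.card = m ∨ A.card = m + 1 := by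
    intro A hA
    rcases mem_union.1 hA with h | h
    · exact Or.inl (mem_powersetCard_univ.1 h)
    · exact Or.inr (mem_powersetCard_univ.1 h)
  have hlev : ∀ A B : Finset (Fin n), A ∈ F → B ∈ F → A ⊂ B →
      A.card = m ∧ B.card = m + 1 := by
    intro A B hA hB hAB
    have hc : A.card < B.card := card_lt_card hAB
    rcases hmem A hA with h1 | h1 <;> rcases hmem B hB with h2 | h2 <;> omega
  classical
  let cg : ({A // A ∈ F} → Bool) → ({A // A ∈ F} → Fin 4) := fun g A =>
    if (A : Finset (Fin n)).card = m then (if g A then 0 else 1)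
    else (if g A then 2 else 3)
  let c0 : {A // A ∈ F} → Fin 4 := fun A =>
    if (A : Finset (Fin n)).card = m then 2 else 0
  have hcgm : ∀ (g) (A : {A // A ∈ F}) (_ : (A : Finset (Fin n)).card = m),
      cg g A = if g A then 0 else 1 := fun g A h => if_pos h
  have hcgm1 : ∀ (g) (A : {A // A ∈ F}) (_ : ¬ (A : Finset (Fin n)).card = m),
      cg g A = if g A then 2 else 3 := fun g A h => if_neg h
  have hc0m : ∀ (A : {A // A ∈ F}) (_ : (A : Finset (Fin n)).card = m),
      c0 A = 2 := fun A h => if_pos h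
  have hc0m1 : ∀ (A : {A // A ∈ F}) (_ : ¬ (A : Finset (Fin n)).card = m),
      c0 A = 0 := fun A h => if_neg h
  have hcg : ∀ g, IsRKColouring 2 F (cg g) := by
    intro g ch hch
    refine ⟨0, 1, ?_⟩
    obtain ⟨ha, hb⟩ := hlev _ _ (ch 0).2 (ch 1).2 (hch 0 1 (by decide))
    have hb' : ¬ (ch 1 : Finset (Fin n)).card = m := by omega
    rw [hcgm g (ch 0) ha, hcgm1 g (ch 1) hb']
    cases g (ch 0) <;> cases g (ch 1) <;> decide
  have hc0 : IsRKColouring 2 F c0 := by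
    intro ch hch
    refine ⟨0, 1, ?_⟩
    obtain ⟨ha, hb⟩ := hlev _ _ (ch 0).2 (ch 1).2 (hch 0 1 (by decide))
    have hb' : ¬ (ch 1 : Finset (Fin n)).card = m := by omega
    rw [hc0m (ch 0) ha, hc0m1 (ch 1) hb']
    decide
  let f : ({A // A ∈ F} → Bool) ⊕ Unit → {c : {A // A ∈ F} → Fin 4 // IsRKColouring 2 F c} :=
    fun x => match x with
      | Sum.inl g => ⟨cg g, hcg g⟩
      | Sum.inr _ => ⟨c0, hc0⟩
  obtain ⟨A₀, hA₀sub, hA₀card⟩ :=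
    Finset.exists_subset_card_eq (show m ≤ (Finset.univ : Finset (Fin n)).card by
      rw [Finset.card_fin]; omega)
  have hA₀F : A₀ ∈ F := mem_union_left _ (mem_powersetCard_univ.2 hA₀card)
  have hfinj : Function.Injective f := by
    intro x y hxy
    match x, y with
    | Sum.inl g, Sum.inl g' =>
      have h : cg g = cg g' := congrArg Subtype.val hxy
      have : g = g' := by
        funext A
        have hA := congrFun h A
        by_cases hc : (A : Finset (Fin n)).card = m
        · rw [hcgm g A hc, hcgm g' A hc] at hA
          cases hg : g A <;> cases hg' : g' A <;> rw [hg, hg'] at hA <;>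
            first | rfl | exact absurd hA (by decide)
        · rw [hcgm1 g A hc, hcgm1 g' A hc] at hA
          cases hg : g A <;> cases hg' : g' A <;> rw [hg, hg'] at hA <;>
            first | rfl | exact absurd hA (by decide)
      rw [this]
    | Sum.inl g, Sum.inr _ =>
      exfalso
      have h : cg g = c0 := congrArg Subtype.val hxy
      have hA := congrFun h ⟨A₀, hA₀F⟩
      rw [hcgm g ⟨A₀, hA₀F⟩ hA₀card, hc0m ⟨A₀, hA₀F⟩ hA₀card] at hA
      cases hg : g ⟨A₀, hA₀F⟩ <;> rw [hg] at hA <;> exact absurd hA (by decide)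
    | Sum.inr _, Sum.inl g =>
      exfalso
      have h : c0 = cg g := congrArg Subtype.val hxy
      have hA := congrFun h ⟨A₀, hA₀F⟩
      rw [hcgm g ⟨A₀, hA₀F⟩ hA₀card, hc0m ⟨A₀, hA₀F⟩ hA₀card] at hA
      cases hg : g ⟨A₀, hA₀F⟩ <;> rw [hg] at hA <;> exact absurd hA (by decide)
    | Sum.inr _, Sum.inr _ => rfl
  have hcard : Nat.card (({A // A ∈ F} → Bool) ⊕ Unit) ≤ numColourings 4 2 n F :=
    Nat.card_le_card_of_injective f hfinj
  have hdisj : Disjoint (Finset.powersetCard m (Finset.univ : Finset (Fin n)))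
      (Finset.powersetCard (m + 1) (Finset.univ : Finset (Fin n))) := by
    rw [Finset.disjoint_left]
    intro A h1 h2
    have h1' := mem_powersetCard_univ.1 h1
    have h2' := mem_powersetCard_univ.1 h2
    omega
  have hsym : n.choose (m + 1) = n.choose m := by
    have h := Nat.choose_symm (show m ≤ n by omega)
    rwa [show n - m = m + 1 by omega] at h
  have hFcard : F.card = 2 * n.choose m := by
    rw [hF, card_union_of_disjoint hdisj, card_powersetCard, card_powersetCard,
      Finset.card_fin, hsym]
    ring
  have hdom : Nat.card (({A // A ∈ F} → Bool) ⊕ Unit) = 4 ^ n.choose m + 1 := by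
    rw [Nat.card_sum, Nat.card_eq_fintype_card, Nat.card_eq_fintype_card,
      Fintype.card_fun, Fintype.card_coe, Fintype.card_bool, Fintype.card_unit, hFcard,
      show (4 : ℕ) = 2 ^ 2 from rfl, ← pow_mul, mul_comm]
  calc 4 ^ n.choose m < 4 ^ n.choose m + 1 := by omega
    _ = Nat.card (({A // A ∈ F} → Bool) ⊕ Unit) := hdom.symm
    _ ≤ numColourings 4 2 n F := hcard

/-- For all sufficiently large `m`, with `n = 2m+1`, the union of the two
middle levels of `2^[n]` has strictly more than `4^(C(n,m))` `(4,2)`-colourings, and in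
particular more `(4,2)`-colourings than any antichain in `2^[n]`. -/
theorem four_colourings_two_levels_beat_antichains :
    ∃ m₀ : ℕ, ∀ m : ℕ, m₀ ≤ m →
      4 ^ ((2 * m + 1).choose m) <
        numColourings 4 2 (2 * m + 1)
          (Finset.powersetCard m (Finset.univ : Finset (Fin (2 * m + 1))) ∪
            Finset.powersetCard (m + 1) (Finset.univ : Finset (Fin (2 * m + 1)))) ∧
      ∀ G : Finset (Finset (Fin (2 * m + 1))),
        IsAntichain (· ⊆ ·) (G : Set (Finset (Fin (2 * m + 1)))) →
        numColourings 4 2 (2 * m + 1) G <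
          numColourings 4 2 (2 * m + 1)
            (Finset.powersetCard m (Finset.univ : Finset (Fin (2 * m + 1))) ∪
              Finset.powersetCard (m + 1) (Finset.univ : Finset (Fin (2 * m + 1)))) := by
  refine ⟨0, fun m _ => ⟨two_levels_lower m, fun G hG => ?_⟩⟩
  calc numColourings 4 2 (2 * m + 1) G = 4 ^ G.card := antichain_numColourings G hG
    _ ≤ 4 ^ ((2 * m + 1).choose m) := by
        apply Nat.pow_le_pow_right (by norm_num)
        have := IsAntichain.sperner hG
        simpa [Fintype.card_fin, show (2 * m + 1) / 2 = m by omega] using this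
    _ < _ := two_levels_lower m
end

section
/- For all integers k ≥ 2 and n ≥ 4k², one has C(n,⌊n/2⌋) ≤ (1 + 2k²/n)·C(n,⌊(n-k)/2⌋); equivalently, C(n,⌊(n-k)/2⌋)⁻¹ ≤ (1 + 2k²/n)·C(n,⌊n/2⌋)⁻¹. -/

lemma chooseProdAux (n j : ℕ) : ∀ t, j ≤ t →
    n.choose t * ∏ i ∈ Finset.Ico j t, (i + 1) =
      n.choose j * ∏ i ∈ Finset.Ico j t, (n - i) := by
  intro t hjt
  induction t, hjt using Nat.le_induction with
  | base => simp
  | succ t hjt ih =>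
    rw [Finset.prod_Ico_succ_top hjt, Finset.prod_Ico_succ_top hjt]
    calc n.choose (t+1) * ((∏ i ∈ Finset.Ico j t, (i+1)) * (t+1))
        = (n.choose (t+1) * (t+1)) * ∏ i ∈ Finset.Ico j t, (i+1) := by ring
      _ = (n.choose t * (n - t)) * ∏ i ∈ Finset.Ico j t, (i+1) := by
            rw [Nat.choose_succ_right_eq]
      _ = (n.choose t * ∏ i ∈ Finset.Ico j t, (i+1)) * (n - t) := by ring
      _ = (n.choose j * ∏ i ∈ Finset.Ico j t, (n-i)) * (n - t) := by rw [ih]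
      _ = n.choose j * ((∏ i ∈ Finset.Ico j t, (n-i)) * (n - t)) := by ring

lemma keyProdAux (n j : ℕ) : ∀ t, j ≤ t → 2 * t ≤ n + 1 →
    (j+1) * ∏ i ∈ Finset.Ico j t, (n - i) ≤
      (j+1) * ∏ i ∈ Finset.Ico j t, (i+1)
        + ((t - j) * (n - t - j)) * ∏ i ∈ Finset.Ico j t, (n - i) := by
  intro t hjt
  induction t, hjt using Nat.le_induction with
  | base => intro _; simp
  | succ t hjt ih =>
    intro h2
    have ih' := ih (by omega)
    rw [Finset.prod_Ico_succ_top hjt, Finset.prod_Ico_succ_top hjt]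
    obtain ⟨s, w, hs, hw, hnt, hv, hs1, hv'⟩ :
        ∃ s w, s = t - j ∧ w = n - 2*t - 1 ∧ n - t = (t+1) + w ∧
          n - t - j = s + w + 1 ∧ t + 1 - j = s + 1 ∧ n - (t+1) - j = s + w := by
      exact ⟨t - j, n - 2*t - 1, rfl, rfl, by omega, by omega, by omega, by omega⟩
    set A := ∏ i ∈ Finset.Ico j t, (n - i) with hA
    set B := ∏ i ∈ Finset.Ico j t, (i+1) with hB
    rw [hv, ← hs] at ih'
    rw [hnt, hs1, hv']
    -- goal: (j+1) * (A * ((t+1)+w)) ≤ (j+1) * (B * (t+1)) + ((s+1)*(s+w)) * (A * ((t+1)+w))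
    have h3 : (j+1) * A * (t+1) ≤ ((j+1) * B + (s * (s + w + 1)) * A) * (t+1) :=
      Nat.mul_le_mul_right _ ih'
    nlinarith [h3, Nat.zero_le ((s+1)*(s+w)*(A*w)),
      Nat.mul_le_mul_right (A*w) (show j+1 ≤ t+1 by omega)]

lemma natMain (n k : ℕ) (hk : 2 ≤ k) (hn : 4 * k ^ 2 ≤ n) :
    n * n.choose (n / 2) ≤ (n + 2 * k ^ 2) * n.choose ((n - k) / 2) := by
  have hkn : k ≤ n := by nlinarith
  set m := n / 2 with hm
  set j := (n - k) / 2 with hj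
  have hjm : j ≤ m := by omega
  have h2m : 2 * m ≤ n + 1 := by omega
  set A := ∏ i ∈ Finset.Ico j m, (n - i) with hA
  set B := ∏ i ∈ Finset.Ico j m, (i+1) with hB
  have hchoose := chooseProdAux n j m hjm
  have hkey := keyProdAux n j m hjm h2m
  -- the AM-GM bound: 4 * S ≤ (k+1)^2
  have hamgm : 4 * ((m - j) * (n - m - j)) ≤ (k+1)^2 := by
    have h1 : (m - j) + (n - m - j) ≤ k + 1 := by omega
    set u := m - j with hu
    set v := n - m - j with hvv
    zify at h1 ⊢
    nlinarith [sq_nonneg ((u:ℤ) - (v:ℤ)), h1]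
  -- the main arithmetic bound
  have harith : (n + 2 * k^2) * ((k+1)^2) ≤ (2 * k^2) * (4 * (j+1)) := by
    have hj2 : n - k + 1 ≤ 2 * (j + 1) := by omega
    have key : (n + 2 * k^2) * ((k+1)^2) ≤ 4 * k^2 * (n - k + 1) := by
      have hkZ : (2:ℤ) ≤ (k:ℤ) := by exact_mod_cast hk
      have hnZ : (4:ℤ) * (k:ℤ)^2 ≤ (n:ℤ) := by exact_mod_cast hn
      zify [hkn]
      have e1 : (0:ℤ) ≤ (3*(k:ℤ)^2 - 2*k - 1) * ((n:ℤ) - 4*(k:ℤ)^2) :=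
        mul_nonneg (by nlinarith) (by linarith)
      have e2 : (0:ℤ) ≤ (k:ℤ)^2 * (5*(k:ℤ)^2 - 8*k - 1) :=
        mul_nonneg (by positivity) (by nlinarith)
      nlinarith [e1, e2]
    calc (n + 2 * k^2) * ((k+1)^2) ≤ 4 * k^2 * (n - k + 1) := key
      _ ≤ 4 * k^2 * (2 * (j + 1)) := Nat.mul_le_mul_left _ hj2
      _ = (2 * k^2) * (4 * (j+1)) := by ring
  -- combine: (n+2k²)·S ≤ 2k²·(j+1)
  have hS : (n + 2 * k^2) * ((m - j) * (n - m - j)) ≤ (2 * k^2) * (j + 1) := by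
    refine Nat.le_of_mul_le_mul_left ?_ (show 0 < 4 by norm_num)
    calc 4 * ((n + 2 * k^2) * ((m - j) * (n - m - j)))
        = (n + 2 * k^2) * (4 * ((m - j) * (n - m - j))) := by ring
      _ ≤ (n + 2*k^2) * ((k+1)^2) := Nat.mul_le_mul_left _ hamgm
      _ ≤ (2 * k^2) * (4 * (j+1)) := harith
      _ = 4 * ((2 * k^2) * (j + 1)) := by ring
  -- derive n·((j+1)·A) ≤ (n+2k²)·((j+1)·B)
  have hmul : n * ((j+1) * A) ≤ (n + 2*k^2) * ((j+1) * B) := by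
    have h1 : (n + 2*k^2) * ((j+1) * A) ≤
        (n + 2*k^2) * ((j+1) * B) + ((n + 2*k^2) * ((m-j)*(n-m-j))) * A := by
      calc (n + 2*k^2) * ((j+1) * A)
          ≤ (n + 2*k^2) * ((j+1) * B + ((m-j)*(n-m-j)) * A) := Nat.mul_le_mul_left _ hkey
        _ = (n + 2*k^2) * ((j+1) * B) + ((n + 2*k^2) * ((m-j)*(n-m-j))) * A := by ring
    have h2 : ((n + 2*k^2) * ((m-j)*(n-m-j))) * A ≤ ((2*k^2) * (j+1)) * A :=
      Nat.mul_le_mul_right _ hS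
    have h3 : n * ((j+1) * A) + (2*k^2) * ((j+1) * A) ≤
        (n + 2*k^2) * ((j+1) * B) + (2*k^2) * ((j+1) * A) := by
      calc n * ((j+1) * A) + (2*k^2) * ((j+1) * A)
          = (n + 2*k^2) * ((j+1) * A) := by ring
        _ ≤ (n + 2*k^2) * ((j+1) * B) + ((n + 2*k^2) * ((m-j)*(n-m-j))) * A := h1
        _ ≤ (n + 2*k^2) * ((j+1) * B) + ((2*k^2) * (j+1)) * A := by omega
        _ = (n + 2*k^2) * ((j+1) * B) + (2*k^2) * ((j+1) * A) := by ring
    omega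
  -- conclude via the choose identity
  have hB0 : 0 < (j+1) * B := by
    refine Nat.mul_pos (by omega) (Finset.prod_pos ?_)
    intro i _; omega
  refine Nat.le_of_mul_le_mul_right ?_ hB0
  calc (n * n.choose m) * ((j+1) * B)
      = (n * (j+1)) * (n.choose m * B) := by ring
    _ = (n * (j+1)) * (n.choose j * A) := by rw [hchoose]
    _ = n.choose j * (n * ((j+1) * A)) := by ring
    _ ≤ n.choose j * ((n + 2*k^2) * ((j+1) * B)) := Nat.mul_le_mul_left _ hmul
    _ = ((n + 2*k^2) * n.choose j) * ((j+1) * B) := by ring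

/-- For integers `k ≥ 2` and `n ≥ 4k²`,
`C(n,⌊n/2⌋) ≤ (1 + 2k²/n)·C(n,⌊(n-k)/2⌋)`; equivalently,
`C(n,⌊(n-k)/2⌋)⁻¹ ≤ (1 + 2k²/n)·C(n,⌊n/2⌋)⁻¹`. -/
theorem binomial_weight_bound (n k : ℕ) (hk : 2 ≤ k) (hn : 4 * k ^ 2 ≤ n) :
    (n.choose (n / 2) : ℝ) ≤
      (1 + 2 * (k : ℝ) ^ 2 / (n : ℝ)) * (n.choose ((n - k) / 2) : ℝ) ∧
    ((n.choose ((n - k) / 2) : ℝ))⁻¹ ≤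
      (1 + 2 * (k : ℝ) ^ 2 / (n : ℝ)) * ((n.choose (n / 2) : ℝ))⁻¹ := by
  have hn0 : (0:ℝ) < n := by
    have : 0 < n := by nlinarith
    exact_mod_cast this
  have hnat := natMain n k hk hn
  have hcast : (n:ℝ) * (n.choose (n/2) : ℝ) ≤
      ((n:ℝ) + 2 * (k:ℝ)^2) * (n.choose ((n-k)/2) : ℝ) := by exact_mod_cast hnat
  have hc : (1 + 2 * (k : ℝ) ^ 2 / (n : ℝ)) = ((n:ℝ) + 2 * (k:ℝ)^2) / (n:ℝ) := by
    field_simp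
  have hm0 : (0:ℝ) < (n.choose (n/2) : ℝ) := by
    exact_mod_cast Nat.choose_pos (Nat.div_le_self n 2)
  have hj0 : (0:ℝ) < (n.choose ((n-k)/2) : ℝ) := by
    exact_mod_cast Nat.choose_pos (le_trans (Nat.div_le_self _ 2) (Nat.sub_le n k))
  have h1 : (n.choose (n / 2) : ℝ) ≤
      (1 + 2 * (k : ℝ) ^ 2 / (n : ℝ)) * (n.choose ((n - k) / 2) : ℝ) := by
    rw [hc, div_mul_eq_mul_div, le_div_iff₀ hn0]
    nlinarith [hcast]
  refine ⟨h1, ?_⟩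
  rw [show (1 + 2 * (k : ℝ) ^ 2 / (n : ℝ)) * ((n.choose (n / 2) : ℝ))⁻¹
      = (1 + 2 * (k : ℝ) ^ 2 / (n : ℝ)) / (n.choose (n / 2) : ℝ) by ring,
    inv_eq_one_div, div_le_div_iff₀ hj0 hm0]
  nlinarith [h1]
end
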